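/- arXiv:1007.1635 — 5 statements merged into one kernel-verified Lean document; each statement's English description precedes it below -/
import Mathlib

section
/- A p-adic analytic function on Z_p that takes one of its values infinitely many times is constant. -/
open Filter Topology

variable {p : ℕ} [Fact p.Prime]

lemma padic_shift_hasSum (a : ℕ → ℚ_[p]) (ha : Tendsto a atTop (𝓝 0))
    (g : ℤ_[p] → ℚ_[p])
    (hg : ∀ z : ℤ_[p], HasSum (fun k : ℕ => a k * (z : ℚ_[p]) ^ k) (g z))
    (z₀ u : ℤ_[p]) :
    HasSum (fun m : ℕ =>
      (∑' k : ℕ, ((m + k).choose m : ℚ_[p]) * a (m + k) * (z₀ : ℚ_[p]) ^ k)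
        * (u : ℚ_[p]) ^ m) (g (z₀ + u)) := by
  classical
  set F : ℕ × ℕ → ℚ_[p] := fun q =>
    if q.2 ≤ q.1 then (q.1.choose q.2 : ℚ_[p]) * a q.1 * (z₀ : ℚ_[p]) ^ (q.1 - q.2)
      * (u : ℚ_[p]) ^ q.2 else 0 with hFdef
  have hnorm : ∀ q : ℕ × ℕ, ‖F q‖ ≤ ‖a q.1‖ := by
    rintro ⟨n, m⟩
    simp only [hFdef]
    split_ifs with h
    · rw [norm_mul, norm_mul, norm_mul, norm_pow, norm_pow]
      have h1 : ‖((n.choose m : ℤ) : ℚ_[p])‖ ≤ 1 := Padic.norm_int_le_one _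
      rw [Int.cast_natCast] at h1
      calc ‖(n.choose m : ℚ_[p])‖ * ‖a n‖ * ‖(z₀ : ℚ_[p])‖ ^ (n - m) * ‖(u : ℚ_[p])‖ ^ m
          ≤ 1 * ‖a n‖ * 1 ^ (n - m) * 1 ^ m := by
            gcongr <;> first | exact h1 | exact z₀.2 | exact u.2 | positivity
        _ = ‖a n‖ := by ring
    · simp
  -- summability of the double family
  have hF : Summable F := by
    apply NonarchimedeanAddGroup.summable_of_tendsto_cofinite_zero
    rw [NormedAddCommGroup.tendsto_nhds_zero]
    intro ε hε
    rw [eventually_cofinite]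
    obtain ⟨N, hN⟩ := (Metric.tendsto_atTop.mp ha ε hε)
    apply Set.Finite.subset ((Finset.range N ×ˢ Finset.range N : Finset (ℕ × ℕ)).finite_toSet)
    rintro ⟨n, m⟩ hq
    simp only [Set.mem_setOf_eq, not_lt] at hq
    have hmn : m ≤ n := by
      by_contra hc
      simp only [hFdef, if_neg hc, norm_zero] at hq
      linarith
    have hnN : n < N := by
      by_contra hc
      have h2 := hN n (le_of_not_gt hc)
      rw [dist_zero_right] at h2
      exact absurd hq (not_le.mpr (lt_of_le_of_lt (hnorm (n, m)) h2))
    simp only [Finset.coe_product, Set.mem_prod, Finset.mem_coe, Finset.mem_range]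
    exact ⟨hnN, lt_of_le_of_lt hmn hnN⟩
  -- fiberwise sums over n (second coordinate summed)
  have hcoe : ((z₀ + u : ℤ_[p]) : ℚ_[p]) = (z₀ : ℚ_[p]) + (u : ℚ_[p]) := by push_cast; ring
  have hfib1 : ∀ n : ℕ, HasSum (fun m => F (n, m)) (a n * ((z₀ + u : ℤ_[p]) : ℚ_[p]) ^ n) := by
    intro n
    have h0 : ∀ m ∉ Finset.range (n + 1), F (n, m) = 0 := by
      intro m hm
      simp only [Finset.mem_range, not_lt] at hm
      simp only [hFdef]
      rw [if_neg]
      omega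
    have : HasSum (fun m => F (n, m)) (∑ m ∈ Finset.range (n + 1), F (n, m)) :=
      hasSum_sum_of_ne_finset_zero h0
    convert this using 1
    rw [hcoe, add_comm (z₀ : ℚ_[p]) (u : ℚ_[p]), add_pow, Finset.mul_sum]
    apply Finset.sum_congr rfl
    intro m hm
    have hmn : m ≤ n := Nat.lt_succ_iff.mp (Finset.mem_range.mp hm)
    simp only [hFdef, if_pos hmn]
    ring
  have hFsum : HasSum F (g (z₀ + u)) := by
    have h1 : HasSum (fun n => a n * ((z₀ + u : ℤ_[p]) : ℚ_[p]) ^ n) (∑' q, F q) :=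
      hF.hasSum.prod_fiberwise hfib1
    have hFs := hF.hasSum
    rwa [h1.unique (hg (z₀ + u))] at hFs
  -- swap coordinates
  have hFswap : HasSum (fun q : ℕ × ℕ => F (q.2, q.1)) (g (z₀ + u)) := by
    have := (Equiv.prodComm ℕ ℕ).hasSum_iff (f := F) (a := g (z₀ + u))
    exact this.mpr hFsum
  -- fiberwise over m (first coordinate of original, summing n)
  refine hFswap.prod_fiberwise fun m => ?_
  -- goal : HasSum (fun n => F (n, m)) (b m * u ^ m)
  set t : ℕ → ℚ_[p] := fun k => ((m + k).choose m : ℚ_[p]) * a (m + k) * (z₀ : ℚ_[p]) ^ k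
    with htdef
  have ht : Summable t := by
    apply NonarchimedeanAddGroup.summable_of_tendsto_cofinite_zero
    rw [Nat.cofinite_eq_atTop]
    have hb : ∀ k, ‖t k‖ ≤ ‖a (m + k)‖ := by
      intro k
      simp only [htdef]
      rw [norm_mul, norm_mul, norm_pow]
      have h1 : ‖(((m + k).choose m : ℤ) : ℚ_[p])‖ ≤ 1 := Padic.norm_int_le_one _
      rw [Int.cast_natCast] at h1
      calc ‖((m + k).choose m : ℚ_[p])‖ * ‖a (m + k)‖ * ‖(z₀ : ℚ_[p])‖ ^ k
          ≤ 1 * ‖a (m + k)‖ * 1 ^ k := by gcongr <;> first | exact h1 | exact z₀.2 | positivity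
        _ = ‖a (m + k)‖ := by ring
    have hten : Tendsto (fun k => a (m + k)) atTop (𝓝 0) := by
      apply ha.comp
      exact tendsto_atTop_mono (fun k => Nat.le_add_left k m) tendsto_id
    exact squeeze_zero_norm hb (by simpa using hten.norm)
  have hts : HasSum (fun k => t k * (u : ℚ_[p]) ^ m) ((∑' k, t k) * (u : ℚ_[p]) ^ m) :=
    ht.hasSum.mul_right _
  have hinj : Function.Injective (fun k : ℕ => m + k) := add_right_injective m
  have h0 : ∀ n ∉ Set.range (fun k : ℕ => m + k), F (n, m) = 0 := by
    intro n hn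
    have : ¬ m ≤ n := by
      intro hle
      exact hn ⟨n - m, show m + (n - m) = n by omega⟩
    simp [hFdef, this]
  rw [← Function.Injective.hasSum_iff hinj h0]
  convert hts using 1
  funext k
  simp only [hFdef, htdef, Function.comp]
  rw [if_pos (Nat.le_add_right m k), Nat.add_sub_cancel_left]

lemma padic_norm_tsum_le {f : ℕ → ℚ_[p]} {C : ℝ} (hC : 0 ≤ C) (h : ∀ i, ‖f i‖ ≤ C) :
    ‖∑' i, f i‖ ≤ C := by
  by_cases hs : Summable f
  · refine le_of_tendsto' hs.hasSum.norm fun s => ?_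
    exact IsUltrametricDist.norm_sum_le_of_forall_le_of_nonneg hC fun i _ => h i
  · simp [tsum_eq_zero_of_not_summable hs, hC]

/-- A `p`-adic analytic function on `ℤ_p` (given by a power series convergent on all of
`ℤ_p`) taking one of its values infinitely many times is constant. -/
theorem padic_analytic_constant_of_infinite_fiber (p : ℕ) [Fact p.Prime]
    (a : ℕ → ℚ_[p]) (g : ℤ_[p] → ℚ_[p])
    (hg : ∀ z : ℤ_[p], HasSum (fun k : ℕ => a k * (z : ℚ_[p]) ^ k) (g z))
    (c : ℚ_[p]) (hinf : {z : ℤ_[p] | g z = c}.Infinite) :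
    ∀ z w : ℤ_[p], g z = g w := by
  classical
  -- accumulation point
  obtain ⟨z₀, hz₀⟩ := hinf.exists_accPt_principal
  -- `a` tends to zero
  have ha : Tendsto a atTop (𝓝 0) := by
    have := (hg 1).summable.tendsto_atTop_zero
    simpa using this
  -- shifted power series coefficients
  set b : ℕ → ℚ_[p] := fun m =>
    ∑' k : ℕ, ((m + k).choose m : ℚ_[p]) * a (m + k) * (z₀ : ℚ_[p]) ^ k with hbdef
  have key : ∀ u : ℤ_[p], HasSum (fun m => b m * (u : ℚ_[p]) ^ m) (g (z₀ + u)) :=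
    fun u => padic_shift_hasSum a ha g hg z₀ u
  set b' : ℕ → ℚ_[p] := Function.update b 0 (b 0 - c) with hb'def
  have key' : ∀ u : ℤ_[p], HasSum (fun m => b' m * (u : ℚ_[p]) ^ m) (g (z₀ + u) - c) := by
    intro u
    have h1 : HasSum (fun m : ℕ => if m = 0 then c else 0) c := hasSum_ite_eq 0 c
    have := (key u).sub h1
    convert this using 1
    · rfl
    funext m
    by_cases hm : m = 0
    · subst hm; simp [hb'def]
    · simp [hb'def, hm, Function.update_of_ne hm]
  -- bound on coefficients
  obtain ⟨Ca, hCa⟩ : ∃ Ca : ℝ, ∀ n, ‖a n‖ ≤ Ca := by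
    obtain ⟨Ca, hCa⟩ := ha.norm.bddAbove_range
    exact ⟨Ca, fun n => hCa (Set.mem_range_self n)⟩
  have hCa0 : 0 ≤ Ca := le_trans (norm_nonneg _) (hCa 0)
  have hbC : ∀ m, ‖b m‖ ≤ Ca := by
    intro m
    apply padic_norm_tsum_le hCa0
    intro k
    rw [norm_mul, norm_mul, norm_pow]
    have h1 : ‖(((m + k).choose m : ℤ) : ℚ_[p])‖ ≤ 1 := Padic.norm_int_le_one _
    rw [Int.cast_natCast] at h1
    calc ‖((m + k).choose m : ℚ_[p])‖ * ‖a (m + k)‖ * ‖(z₀ : ℚ_[p])‖ ^ k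
        ≤ 1 * Ca * 1 ^ k := by gcongr <;> first | exact h1 | exact hCa _ | exact z₀.2
      _ = Ca := by ring
  have hb'C : ∀ m, ‖b' m‖ ≤ Ca + ‖c‖ := by
    intro m
    by_cases hm : m = 0
    · subst hm
      simp only [hb'def, Function.update_self]
      exact (norm_sub_le _ _).trans (add_le_add (hbC 0) le_rfl)
    · simp only [hb'def, Function.update_of_ne hm]
      have := norm_nonneg c
      linarith [hbC m]
  -- the analytic function on ℚ_[p]
  set G : ℚ_[p] → ℚ_[p] := fun x => if h : ‖x‖ ≤ 1 then g (z₀ + ⟨x, h⟩) - c else 0 with hGdef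
  set Q : FormalMultilinearSeries ℚ_[p] ℚ_[p] ℚ_[p] :=
    FormalMultilinearSeries.ofScalars ℚ_[p] b' with hQdef
  have hQr : 1 ≤ Q.radius := by
    have := Q.le_radius_of_bound (Ca + ‖c‖) (r := 1) ?_
    · simpa using this
    · intro n
      simp only [hQdef, FormalMultilinearSeries.ofScalars_norm, NNReal.coe_one, one_pow, mul_one]
      exact hb'C n
  have hGQ : HasFPowerSeriesOnBall G Q 0 1 := by
    refine ⟨hQr, one_pos, fun {y} hy => ?_⟩
    rw [EMetric.mem_ball, edist_zero_right] at hy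
    have hy1 : ‖y‖ ≤ 1 := by
      have h2 : ‖y‖₊ ≤ 1 := by
        have := hy.le
        rwa [← ENNReal.coe_one, enorm_le_coe] at this
      exact_mod_cast h2
    have := key' ⟨y, hy1⟩
    simp only [hGdef, zero_add, dif_pos hy1]
    convert this using 1
    · rfl
    funext n
    simp [hQdef, FormalMultilinearSeries.ofScalars, smul_eq_mul]
  have hanal : AnalyticAt ℚ_[p] G 0 := hGQ.hasFPowerSeriesAt.analyticAt
  -- frequently zero near 0
  have hfreq : ∃ᶠ x in 𝓝[≠] (0 : ℚ_[p]), G x = 0 := by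
    have hacc := accPt_iff_frequently.mp hz₀
    have hmap : Tendsto (fun z : ℤ_[p] => (z : ℚ_[p]) - (z₀ : ℚ_[p])) (𝓝[≠] z₀) (𝓝[≠] 0) := by
      have hiso : Isometry (fun z : ℤ_[p] => (z : ℚ_[p])) :=
        Isometry.of_dist_eq fun x y => by
          rw [dist_eq_norm, dist_eq_norm, ← PadicInt.coe_sub]
          rfl
      apply Tendsto.inf
      · have hc : Continuous (fun z : ℤ_[p] => (z : ℚ_[p]) - (z₀ : ℚ_[p])) :=
          hiso.continuous.sub continuous_const
        simpa using hc.tendsto z₀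
      · rw [tendsto_principal_principal]
        intro z hz
        simp only [Set.mem_compl_iff, Set.mem_singleton_iff] at hz ⊢
        exact sub_ne_zero.mpr fun h => hz (Subtype.coe_injective h)
    have hfreq' : ∃ᶠ z : ℤ_[p] in 𝓝[≠] z₀, G ((z : ℚ_[p]) - (z₀ : ℚ_[p])) = 0 := by
      rw [frequently_nhdsWithin_iff] at *
      refine hacc.mono ?_
      rintro z ⟨hne, hzS⟩
      have hn1 : ‖(z : ℚ_[p]) - (z₀ : ℚ_[p])‖ ≤ 1 := by
        rw [← PadicInt.coe_sub]
        exact (z - z₀).2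
      refine ⟨?_, hne⟩
      simp only [hGdef]
      rw [dif_pos hn1]
      have hzz : (z₀ + ⟨(z : ℚ_[p]) - (z₀ : ℚ_[p]), hn1⟩ : ℤ_[p]) = z := by
        apply Subtype.ext
        push_cast
        change (z₀ : ℚ_[p]) + ((z : ℚ_[p]) - z₀) = z
        ring
      rw [hzz, Set.mem_setOf_eq.mp hzS, sub_self]
    exact hmap.frequently hfreq'
  have heq : ∀ᶠ x in 𝓝 (0 : ℚ_[p]), G x = 0 :=
    hanal.frequently_zero_iff_eventually_zero.mp hfreq
  have hQ0 : Q = 0 := hGQ.hasFPowerSeriesAt.eq_zero_of_eventually heq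
  have hb'0 : b' = 0 := by
    rwa [hQdef, FormalMultilinearSeries.ofScalars_series_eq_zero] at hQ0
  have hgc : ∀ u : ℤ_[p], g (z₀ + u) = c := by
    intro u
    have := key' u
    rw [hb'0] at this
    simp only [Pi.zero_apply, zero_mul] at this
    have h0 := this.unique hasSum_zero
    exact sub_eq_zero.mp h0
  intro z w
  have hz : g z = c := by
    have := hgc (z - z₀); rwa [add_sub_cancel] at this
  have hw : g w = c := by
    have := hgc (w - z₀); rwa [add_sub_cancel] at this
  rw [hz, hw]
end

section
/- For a Mahler series ∑_{k≥1} b_k C(z,k) with b_k in a finite extension of Q_p, if |p^{k(p^l-1)/((p-1)p^l)} b_k / k!|_p → 0 as k → ∞, then the series defines an analytic function on p^l Z_p. -/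
set_option linter.unusedSectionVars false


open Filter

/-- The binomial coefficient function `binom(z,k) = z(z-1)⋯(z-k+1)/k!` of `z ∈ ℤ_p`,
with values in a finite extension `K` of `ℚ_p`. -/
noncomputable def padicBinomial (p : ℕ) [Fact p.Prime] (K : Type*)
    [NontriviallyNormedField K] [NormedAlgebra ℚ_[p] K] (z : ℤ_[p]) (k : ℕ) : K :=
  (∏ i ∈ Finset.range k, (algebraMap ℚ_[p] K (z : ℚ_[p]) - (i : K))) / (Nat.factorial k : K)

namespace MahlerAux

open Polynomial Finset

variable (p : ℕ) [hp : Fact p.Prime]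

/-- weight `min l (v_p i)`, with `w 0 = l`. -/
def W (l i : ℕ) : ℕ := if i = 0 then l else min l (padicValNat p i)

/-- partial sums of weights -/
def S (l k : ℕ) : ℕ := ∑ i ∈ Finset.range k, W p l i

lemma W_le (l i : ℕ) : W p l i ≤ l := by
  unfold W; split
  · exact le_rfl
  · exact min_le_left _ _

lemma pow_W_dvd (l : ℕ) {i : ℕ} (hi : i ≠ 0) : p ^ W p l i ∣ i := by
  rw [W, if_neg hi]
  exact dvd_trans (pow_dvd_pow p (min_le_right _ _)) pow_padicValNat_dvd

lemma S_succ (l k : ℕ) : S p l (k + 1) = S p l k + W p l k :=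
  Finset.sum_range_succ _ _

lemma W_eq_card (l i : ℕ) : W p l i = ((Finset.Icc 1 l).filter (fun j => p ^ j ∣ i)).card := by
  rcases eq_or_ne i 0 with rfl | hi
  · simp [W]
  · rw [W, if_neg hi]
    have h : (Finset.Icc 1 l).filter (fun j => p ^ j ∣ i)
        = Finset.Icc 1 (min l (padicValNat p i)) := by
      ext j
      simp only [Finset.mem_filter, Finset.mem_Icc, padicValNat_dvd_iff_le hi, le_min_iff]
      tauto
    rw [h, Nat.card_Icc]
    omega

lemma count_mul_ge (d : ℕ) (hd : 0 < d) (k : ℕ) :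
    k ≤ ((Finset.range k).filter (fun i => d ∣ i)).card * d := by
  induction k with
  | zero => simp
  | succ k ih =>
    rw [Finset.range_add_one, Finset.filter_insert]
    by_cases h : d ∣ k
    · rw [if_pos h, Finset.card_insert_of_notMem (by simp)]
      have : (((Finset.range k).filter (fun i => d ∣ i)).card + 1) * d
          = ((Finset.range k).filter (fun i => d ∣ i)).card * d + d := by ring
      omega
    · rw [if_neg h]
      rcases lt_or_eq_of_le ih with h' | h'
      · exact h'
      · exact absurd (h' ▸ dvd_mul_left d _) h

lemma geom (l : ℕ) : ∑ j ∈ Finset.Icc 1 l, ((p : ℝ) ^ j)⁻¹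
    = ((p : ℝ) ^ l - 1) / (((p : ℝ) - 1) * (p : ℝ) ^ l) := by
  have hp1 : (1 : ℝ) < p := by exact_mod_cast hp.out.one_lt
  have h0 : (p : ℝ) ≠ 0 := by positivity
  have h1 : (p : ℝ) - 1 ≠ 0 := sub_ne_zero.mpr (ne_of_gt hp1)
  induction l with
  | zero => simp
  | succ l ih =>
    rw [Finset.sum_Icc_succ_top (Nat.le_add_left 1 l), ih]
    field_simp
    ring

lemma S_ge (l k : ℕ) :
    (k : ℝ) * (((p : ℝ) ^ l - 1) / (((p : ℝ) - 1) * (p : ℝ) ^ l)) ≤ (S p l k : ℝ) := by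
  have hp1 : (1 : ℝ) < p := by exact_mod_cast hp.out.one_lt
  have hS : S p l k = ∑ j ∈ Finset.Icc 1 l,
      ((Finset.range k).filter (fun i => p ^ j ∣ i)).card := by
    rw [S]
    simp_rw [W_eq_card p, Finset.card_filter]
    rw [Finset.sum_comm]
  rw [hS, ← geom p l, Finset.mul_sum]
  push_cast
  apply Finset.sum_le_sum
  intro j _
  have hpj : (0 : ℝ) < (p : ℝ) ^ j := by positivity
  rw [← div_eq_mul_inv, div_le_iff₀ hpj]
  exact_mod_cast count_mul_ge (p ^ j) (pow_pos hp.out.pos j) k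

section K

variable (K : Type*) [NontriviallyNormedField K] [NormedAlgebra ℚ_[p] K]

/-- The polynomial `∏_{i<k} (p^l X - i)` over `K`. -/
noncomputable def Q (l k : ℕ) : Polynomial K :=
  ∏ i ∈ Finset.range k, (Polynomial.C ((p : K) ^ l) * Polynomial.X - Polynomial.C (i : K))

include hp in
lemma norm_p_K : ‖(p : K)‖ = ((p : ℝ))⁻¹ := by
  rw [show ((p : K)) = algebraMap ℚ_[p] K ((p : ℚ_[p])) from (map_natCast _ p).symm,
    norm_algebraMap', Padic.norm_p]

include p hp in
lemma norm_natCast_le_one (n : ℕ) : ‖(n : K)‖ ≤ 1 := by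
  rw [show ((n : K)) = algebraMap ℚ_[p] K ((n : ℚ_[p])) from (map_natCast _ n).symm,
    norm_algebraMap']
  simpa using Padic.norm_int_le_one (p := p) (n : ℤ)

lemma norm_natCast_le (l : ℕ) {i : ℕ} (hi : i ≠ 0) : ‖(i : K)‖ ≤ ((p : ℝ) ^ (W p l i))⁻¹ := by
  obtain ⟨c, hc⟩ := pow_W_dvd p l hi
  have h : (i : K) = (p : K) ^ (W p l i) * (c : K) := by
    conv_lhs => rw [hc]
    push_cast
    ring
  rw [h, norm_mul, norm_pow, norm_p_K p K, inv_pow]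
  exact mul_le_of_le_one_right (by positivity) (norm_natCast_le_one p K c)

lemma norm_sub_le_max' [IsUltrametricDist K] (a b : K) : ‖a - b‖ ≤ max ‖a‖ ‖b‖ := by
  rw [sub_eq_add_neg]
  simpa [norm_neg] using IsUltrametricDist.norm_add_le_max a (-b)

lemma Q_coeff_norm_le [IsUltrametricDist K] (l k : ℕ) :
    ∀ m, ‖(Q p K l k).coeff m‖ ≤ ((p : ℝ) ^ (S p l k))⁻¹ := by
  have hp1 : (1 : ℝ) ≤ p := by exact_mod_cast hp.out.one_le
  induction k with
  | zero =>
    intro m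
    simp only [Q, Finset.range_zero, Finset.prod_empty, S, Finset.sum_empty, pow_zero, inv_one,
      Polynomial.coeff_one]
    split <;> simp
  | succ k ih =>
    intro m
    have hQ : Q p K l (k + 1)
        = Polynomial.C ((p : K) ^ l) * (Q p K l k * Polynomial.X)
          - Polynomial.C ((k : K)) * Q p K l k := by
      rw [Q, Finset.prod_range_succ, ← Q]
      ring
    have hpos : (0:ℝ) < ((p:ℝ) ^ (S p l (k+1)))⁻¹ := by positivity
    rw [hQ, Polynomial.coeff_sub]
    refine le_trans (norm_sub_le_max' K _ _) (max_le ?_ ?_)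
    · rw [Polynomial.coeff_C_mul, norm_mul, norm_pow, norm_p_K p K]
      have h1 : ‖(Q p K l k * Polynomial.X).coeff m‖ ≤ ((p : ℝ) ^ (S p l k))⁻¹ := by
        cases m with
        | zero =>
          rw [Polynomial.mul_coeff_zero]
          simp only [Polynomial.coeff_X_zero, mul_zero, norm_zero]
          positivity
        | succ n => rw [Polynomial.coeff_mul_X]; exact ih n
      calc ((p:ℝ))⁻¹ ^ l * ‖(Q p K l k * Polynomial.X).coeff m‖
          ≤ ((p:ℝ))⁻¹ ^ l * ((p : ℝ) ^ (S p l k))⁻¹ :=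
            mul_le_mul_of_nonneg_left h1 (by positivity)
        _ = ((p : ℝ) ^ (S p l k + l))⁻¹ := by rw [pow_add, mul_inv, inv_pow]; ring
        _ ≤ ((p : ℝ) ^ (S p l (k+1)))⁻¹ := by
            apply inv_anti₀ (by positivity)
            apply pow_le_pow_right₀ hp1
            rw [S_succ]
            exact Nat.add_le_add_left (W_le p l k) _
    · rw [Polynomial.coeff_C_mul, norm_mul]
      rcases eq_or_ne k 0 with rfl | hk
      · simp only [Nat.cast_zero, norm_zero, zero_mul]
        positivity
      · calc ‖(k:K)‖ * ‖(Q p K l k).coeff m‖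
            ≤ ((p:ℝ) ^ (W p l k))⁻¹ * ((p:ℝ) ^ (S p l k))⁻¹ :=
              mul_le_mul (norm_natCast_le p K l hk) (ih m) (norm_nonneg _) (by positivity)
          _ = ((p : ℝ) ^ (S p l (k+1)))⁻¹ := by rw [S_succ, pow_add, mul_inv]; ring

lemma Q_natDegree_le (l k : ℕ) : (Q p K l k).natDegree ≤ k := by
  refine le_trans (Polynomial.natDegree_prod_le _ _) ?_
  refine le_trans (Finset.sum_le_card_nsmul _ _ 1 ?_) (by simp)
  intro i _
  refine le_trans (Polynomial.natDegree_sub_le _ _) ?_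
  simp only [max_le_iff]
  exact ⟨le_trans (Polynomial.natDegree_C_mul_le _ _) Polynomial.natDegree_X_le, by simp⟩

lemma Q_eval (l k : ℕ) (t : K) :
    (Q p K l k).eval t = ∏ i ∈ Finset.range k, ((p : K) ^ l * t - (i : K)) := by
  simp [Q, Polynomial.eval_prod]

end K

end MahlerAux

set_option maxHeartbeats 1000000 in
/-- For a Mahler series `∑_{k ≥ 1} b_k · binom(z,k)` with coefficients in a finite
extension `K` of `ℚ_p`, if `|p^{k(p^l-1)/((p-1)p^l)} · b_k / k!| → 0` as `k → ∞`,
then the series defines an analytic function on `p^l ℤ_p`: the function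
`z ↦ g(p^l z)` is given by a power series convergent on `ℤ_p`. -/
theorem mahler_series_analytic_on_ball (p : ℕ) [Fact p.Prime] (K : Type*)
    [NontriviallyNormedField K] [NormedAlgebra ℚ_[p] K] [FiniteDimensional ℚ_[p] K]
    [IsUltrametricDist K] (l : ℕ) (hl : 1 ≤ l) (b : ℕ → K)
    (hb : Tendsto (fun k : ℕ =>
        (p : ℝ) ^ (-((k : ℝ) * ((p : ℝ) ^ l - 1) / (((p : ℝ) - 1) * (p : ℝ) ^ l))) *
          ‖b k / (Nat.factorial k : K)‖) atTop (nhds 0)) :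
    ∃ g : ℤ_[p] → K,
      (∀ z : ℤ_[p],
        HasSum (fun k : ℕ => b (k + 1) * padicBinomial p K ((p : ℤ_[p]) ^ l * z) (k + 1))
          (g z)) ∧
      ∃ a : ℕ → K, ∀ z : ℤ_[p],
        HasSum (fun m : ℕ => a m * (algebraMap ℚ_[p] K (z : ℚ_[p])) ^ m) (g z) := by
  classical
  have hcomplete := FiniteDimensional.complete ℚ_[p] K
  have hp1 : (1 : ℝ) < p := by exact_mod_cast (Fact.out : p.Prime).one_lt
  set c : ℕ → K := fun k => b k / (Nat.factorial k : K) with hc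
  set u : ℕ → ℝ := fun k => ‖c k‖ * ((p : ℝ) ^ (MahlerAux.S p l k))⁻¹ with hu
  have hu0 : Tendsto u atTop (nhds 0) := by
    refine squeeze_zero (fun k => by positivity) (fun k => ?_) hb
    show ‖c k‖ * ((p : ℝ) ^ (MahlerAux.S p l k))⁻¹ ≤ _
    rw [mul_comm]
    refine mul_le_mul_of_nonneg_right ?_ (norm_nonneg _)
    have h1 : ((p : ℝ) ^ (MahlerAux.S p l k))⁻¹
        = (p : ℝ) ^ (-(MahlerAux.S p l k : ℝ)) := by
      rw [Real.rpow_neg (by positivity), Real.rpow_natCast]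
    rw [h1, Real.rpow_le_rpow_left_iff hp1, neg_le_neg_iff]
    calc (k : ℝ) * ((p : ℝ) ^ l - 1) / (((p : ℝ) - 1) * (p : ℝ) ^ l)
        = (k : ℝ) * (((p : ℝ) ^ l - 1) / (((p : ℝ) - 1) * (p : ℝ) ^ l)) := by ring
      _ ≤ _ := MahlerAux.S_ge p l k
  have hT : ∀ k m, ‖c k * (MahlerAux.Q p K l k).coeff m‖ ≤ u k := by
    intro k m
    rw [norm_mul]
    exact mul_le_mul_of_nonneg_left (MahlerAux.Q_coeff_norm_le p K l k m) (norm_nonneg _)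
  set G : ℤ_[p] → ℕ × ℕ → K := fun z q =>
    (c (q.1 + 1) * (MahlerAux.Q p K l (q.1 + 1)).coeff q.2)
      * (algebraMap ℚ_[p] K (z : ℚ_[p])) ^ q.2 with hG
  have ht : ∀ z : ℤ_[p], ‖algebraMap ℚ_[p] K (z : ℚ_[p])‖ ≤ 1 := fun z => by
    rw [norm_algebraMap', PadicInt.padic_norm_e_of_padicInt]
    exact PadicInt.norm_le_one z
  have hGle : ∀ z q, ‖G z q‖ ≤ u (q.1 + 1) := by
    intro z q
    calc ‖G z q‖ = ‖c (q.1 + 1) * (MahlerAux.Q p K l (q.1 + 1)).coeff q.2‖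
          * ‖algebraMap ℚ_[p] K (z : ℚ_[p])‖ ^ q.2 := by rw [hG, norm_mul, norm_pow]
      _ ≤ ‖c (q.1 + 1) * (MahlerAux.Q p K l (q.1 + 1)).coeff q.2‖ * 1 :=
          mul_le_mul_of_nonneg_left (pow_le_one₀ (norm_nonneg _) (ht z)) (norm_nonneg _)
      _ = ‖c (q.1 + 1) * (MahlerAux.Q p K l (q.1 + 1)).coeff q.2‖ := mul_one _
      _ ≤ u (q.1 + 1) := hT _ _
  have hGsum : ∀ z, Summable (G z) := by
    intro z
    apply NonarchimedeanAddGroup.summable_of_tendsto_cofinite_zero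
    rw [Metric.tendsto_nhds]
    intro ε hε
    rw [Filter.eventually_cofinite]
    obtain ⟨N, hN⟩ := (Metric.tendsto_atTop.mp hu0) ε hε
    refine Set.Finite.subset (Set.Finite.prod (Set.finite_Iio N) (Set.finite_Iio (N + 2))) ?_
    rintro ⟨k, m⟩ hq
    simp only [Set.mem_setOf_eq, dist_zero_right, not_lt] at hq
    have hk : k + 1 < N := by
      by_contra hk'
      have h2 := hN (k + 1) (by omega)
      rw [Real.dist_eq, sub_zero] at h2
      have hua : u (k + 1) < ε := lt_of_abs_lt h2
      exact absurd (lt_of_le_of_lt (hq.trans (hGle z (k, m))) hua) (lt_irrefl ε)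
    have hm : m < N + 2 := by
      by_contra hm'
      push_neg at hm'
      have hz : (MahlerAux.Q p K l (k + 1)).coeff m = 0 :=
        Polynomial.coeff_eq_zero_of_natDegree_lt
          (lt_of_le_of_lt (MahlerAux.Q_natDegree_le p K l (k + 1)) (by omega))
      have h0 : G z (k, m) = 0 := by simp [hG, hz]
      rw [h0, norm_zero] at hq
      linarith
    exact Set.mem_prod.mpr ⟨Set.mem_Iio.mpr (by omega), Set.mem_Iio.mpr hm⟩
  have hbinom : ∀ (z : ℤ_[p]) (k : ℕ),
      b (k + 1) * padicBinomial p K ((p : ℤ_[p]) ^ l * z) (k + 1)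
        = c (k + 1) * (MahlerAux.Q p K l (k + 1)).eval (algebraMap ℚ_[p] K (z : ℚ_[p])) := by
    intro z k
    have hmap : algebraMap ℚ_[p] K ((((p : ℤ_[p]) ^ l * z : ℤ_[p]) : ℚ_[p]))
        = (p : K) ^ l * algebraMap ℚ_[p] K (z : ℚ_[p]) := by
      push_cast
      rfl
    rw [padicBinomial, hmap, MahlerAux.Q_eval, hc]
    ring
  have hfib : ∀ (z : ℤ_[p]) (k : ℕ),
      HasSum (fun m => G z (k, m))
        (b (k + 1) * padicBinomial p K ((p : ℤ_[p]) ^ l * z) (k + 1)) := by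
    intro z k
    have hvan : ∀ m ∉ Finset.range (k + 2), G z (k, m) = 0 := by
      intro m hm
      rw [Finset.mem_range, not_lt] at hm
      have hz : (MahlerAux.Q p K l (k + 1)).coeff m = 0 :=
        Polynomial.coeff_eq_zero_of_natDegree_lt
          (lt_of_le_of_lt (MahlerAux.Q_natDegree_le p K l (k + 1)) (by omega))
      simp [hG, hz]
    have h := hasSum_sum_of_ne_finset_zero (L := SummationFilter.unconditional ℕ) hvan
    have hsum : ∑ m ∈ Finset.range (k + 2), G z (k, m)
        = b (k + 1) * padicBinomial p K ((p : ℤ_[p]) ^ l * z) (k + 1) := by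
      rw [hbinom z k, Polynomial.eval_eq_sum_range'
        (lt_of_le_of_lt (MahlerAux.Q_natDegree_le p K l (k + 1)) (Nat.lt_succ_self _)),
        Finset.mul_sum]
      refine Finset.sum_congr rfl fun m _ => ?_
      rw [hG]
      ring
    exact hsum ▸ h
  refine ⟨fun z => ∑' q, G z q, fun z => HasSum.prod_fiberwise (hGsum z).hasSum (hfib z), ?_⟩
  set T1 : ℕ → ℕ → K := fun k m => c (k + 1) * (MahlerAux.Q p K l (k + 1)).coeff m with hT1
  have hTsum : ∀ m, Summable (fun k => T1 k m) := by
    intro m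
    apply NonarchimedeanAddGroup.summable_of_tendsto_cofinite_zero
    rw [Nat.cofinite_eq_atTop]
    refine squeeze_zero_norm (fun k => hT (k + 1) m) ?_
    exact hu0.comp (tendsto_add_atTop_nat 1)
  refine ⟨fun m => ∑' k, T1 k m, fun z => ?_⟩
  have hswap : HasSum (fun q : ℕ × ℕ => G z (q.2, q.1)) (∑' q, G z q) :=
    ((Equiv.prodComm ℕ ℕ).hasSum_iff).mpr (hGsum z).hasSum
  refine HasSum.prod_fiberwise hswap (fun m => ?_)
  have h2 := (hTsum m).hasSum.mul_right ((algebraMap ℚ_[p] K (z : ℚ_[p])) ^ m)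
  convert h2 using 1
end

section
/- If φ : O^n → O^n is given by power series φ_i with integral coefficients satisfying φ_i(x) ≡ x_i mod 𝔪 and the coefficient of x^α in φ_i divisible by r^{|α|−1} for |α| > 1 (r a uniformizer), then for any ω ∈ O^n there exist functions g_1,...,g_n : Z_p → O, continuous on Z_p, with g(0) = ω and g(z+1) = φ(g(z)) for all z ∈ Z_p. -/
open Filter Topology

open Finset in
lemma aux_pow_sub {K : Type*} [NontriviallyNormedField K] [IsUltrametricDist K]
    (a b : K) (ha : ‖a‖ ≤ 1) (hb : ‖b‖ ≤ 1) (m : ℕ) : ‖a ^ m - b ^ m‖ ≤ ‖a - b‖ := by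
  rw [← geom_sum₂_mul, norm_mul]
  have h : ‖∑ i ∈ Finset.range m, a ^ i * b ^ (m - 1 - i)‖ ≤ 1 := by
    apply IsUltrametricDist.norm_sum_le_of_forall_le_of_nonneg zero_le_one
    intro i _
    rw [norm_mul, norm_pow, norm_pow]
    exact mul_le_one₀ (pow_le_one₀ (norm_nonneg a) ha) (pow_nonneg (norm_nonneg b) _)
      (pow_le_one₀ (norm_nonneg b) hb)
  exact mul_le_of_le_one_left (norm_nonneg _) h

lemma aux_prod_sub {K : Type*} [NontriviallyNormedField K] [IsUltrametricDist K] {n : ℕ}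
    (x y : Fin n → K) (hx : ∀ j, ‖x j‖ ≤ 1) (hy : ∀ j, ‖y j‖ ≤ 1) {ε : ℝ} (hε : 0 ≤ ε)
    (hxy : ∀ j, ‖x j - y j‖ ≤ ε) (d : Fin n →₀ ℕ) :
    ‖∏ j, x j ^ d j - ∏ j, y j ^ d j‖ ≤ ε := by
  suffices H : ∀ s : Finset (Fin n), ‖∏ j ∈ s, x j ^ d j - ∏ j ∈ s, y j ^ d j‖ ≤ ε from H _
  intro s
  induction s using Finset.cons_induction with
  | empty => simpa using hε
  | cons c s hc ih =>
    rw [Finset.prod_cons, Finset.prod_cons]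
    have e : x c ^ d c * ∏ j ∈ s, x j ^ d j - y c ^ d c * ∏ j ∈ s, y j ^ d j
        = (x c ^ d c - y c ^ d c) * ∏ j ∈ s, x j ^ d j
          + y c ^ d c * (∏ j ∈ s, x j ^ d j - ∏ j ∈ s, y j ^ d j) := by ring
    rw [e]
    refine (IsUltrametricDist.norm_add_le_max _ _).trans (max_le ?_ ?_)
    · rw [norm_mul]
      have h1 : ‖x c ^ d c - y c ^ d c‖ ≤ ε := (aux_pow_sub _ _ (hx c) (hy c) _).trans (hxy c)
      have h2 : ‖∏ j ∈ s, x j ^ d j‖ ≤ 1 := by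
        rw [norm_prod]
        exact Finset.prod_le_one (fun j _ => norm_nonneg _)
          (fun j _ => by rw [norm_pow]; exact pow_le_one₀ (norm_nonneg _) (hx j))
      calc ‖x c ^ d c - y c ^ d c‖ * ‖∏ j ∈ s, x j ^ d j‖ ≤ ε * 1 :=
            mul_le_mul h1 h2 (norm_nonneg _) hε
        _ = ε := mul_one ε
    · rw [norm_mul]
      have h2 : ‖y c ^ d c‖ ≤ 1 := by rw [norm_pow]; exact pow_le_one₀ (norm_nonneg _) (hy c)
      calc ‖y c ^ d c‖ * ‖∏ j ∈ s, x j ^ d j - ∏ j ∈ s, y j ^ d j‖ ≤ 1 * ε :=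
            mul_le_mul h2 ih (norm_nonneg _) zero_le_one
        _ = ε := one_mul ε

lemma aux_classify {n : ℕ} (d : Fin n →₀ ℕ) :
    d = 0 ∨ (∃ j, d = Finsupp.single j 1) ∨ 1 < d.sum fun _ m => m := by
  have hsum : (d.sum fun _ m => m) = ∑ k ∈ d.support, d k := rfl
  have hle : ∀ k, d k ≤ d.sum fun _ m => m := by
    intro k
    by_cases hk : k ∈ d.support
    · rw [hsum]; exact Finset.single_le_sum (fun _ _ => Nat.zero_le _) hk
    · simp [Finsupp.notMem_support_iff.mp hk]
  rcases Nat.lt_or_ge (d.sum fun _ m => m) 2 with h | h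
  · have h01 : (d.sum fun _ m => m) = 0 ∨ (d.sum fun _ m => m) = 1 := by omega
    rcases h01 with h0 | h1
    · left; ext k; have := hle k; simp only [Finsupp.coe_zero, Pi.zero_apply]; omega
    · right; left
      have hne : d ≠ 0 := by rintro rfl; simp at h1
      obtain ⟨j, hj⟩ : ∃ j, d j ≠ 0 := by
        by_contra hc; push_neg at hc; exact hne (by ext k; simpa using hc k)
      refine ⟨j, ?_⟩
      ext k
      by_cases hkj : k = j
      · subst hkj
        rw [Finsupp.single_eq_same]
        have := hle k; omega
      · rw [Finsupp.single_eq_of_ne' (Ne.symm hkj)]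
        by_contra hk0
        have hsub : ({j, k} : Finset (Fin n)) ⊆ d.support := by
          intro t ht
          simp only [Finset.mem_insert, Finset.mem_singleton] at ht
          rcases ht with rfl | rfl <;> simp [Finsupp.mem_support_iff, hj, hk0]
        have h2 : d j + d k ≤ ∑ t ∈ d.support, d t := by
          rw [← Finset.sum_pair (Ne.symm hkj)]
          exact Finset.sum_le_sum_of_subset hsub
        rw [← hsum] at h2
        omega
  · right; right; omega

lemma aux_mono_single {K : Type*} [NontriviallyNormedField K] {n : ℕ}
    (x : Fin n → K) (j : Fin n) : ∏ k, x k ^ (Finsupp.single j 1) k = x j := by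
  rw [Finset.prod_eq_single j]
  · rw [Finsupp.single_eq_same, pow_one]
  · intro k _ hkj; rw [Finsupp.single_eq_of_ne' (Ne.symm hkj), pow_zero]
  · intro h; exact absurd (Finset.mem_univ j) h

section Aux
variable {K : Type*} [NontriviallyNormedField K] [IsUltrametricDist K] {n : ℕ}

lemma aux_usub (x y : K) : ‖x - y‖ ≤ max ‖x‖ ‖y‖ := by
  rw [sub_eq_add_neg]
  simpa using IsUltrametricDist.norm_add_le_max x (-y)

lemma aux_tri3 (A B C : K) (c : ℝ) (hA : ‖A‖ ≤ c) (hB : ‖B‖ ≤ c) (hC : ‖C‖ ≤ c) :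
    ‖A + (B + C)‖ ≤ c :=
  le_trans (IsUltrametricDist.norm_add_le_max _ _) (max_le hA
    (le_trans (IsUltrametricDist.norm_add_le_max _ _) (max_le hB hC)))

lemma aux_tri2 (A B : K) (c : ℝ) (hA : ‖A‖ ≤ c) (hB : ‖B‖ ≤ c) : ‖A + B‖ ≤ c :=
  le_trans (IsUltrametricDist.norm_add_le_max _ _) (max_le hA hB)

end Aux



/-- Interpolation of orbits (Bell–Ghioca–Tucker, adapted): let `K` be a finite extension
of `ℚ_p` with ring of integers `O = {x : K, ‖x‖ ≤ 1}` and uniformizer `r`. If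
`φ : O^n → O^n` is given by power series `φ_i` with integral coefficients `a i d`
satisfying `φ_i(x) ≡ x_i mod 𝔪` and with the coefficient of the monomial of
multidegree `d` divisible by `r^{|d|-1}` whenever `|d| > 1`, then for any `ω ∈ O^n`
there is a continuous `g : ℤ_p → O^n` with `g(0) = ω` and `g(z+1) = φ(g(z))`. -/
theorem exists_continuous_orbit_interpolation (p : ℕ) [Fact p.Prime] (K : Type*)
    [NontriviallyNormedField K] [NormedAlgebra ℚ_[p] K] [FiniteDimensional ℚ_[p] K]
    [IsUltrametricDist K] (n : ℕ) (r : K) (hr0 : r ≠ 0) (hr : ‖r‖ < 1)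
    (a : Fin n → (Fin n →₀ ℕ) → K) (ha : ∀ i d, ‖a i d‖ ≤ 1)
    (φ : (Fin n → K) → (Fin n → K))
    (heval : ∀ x : Fin n → K, (∀ j, ‖x j‖ ≤ 1) → ∀ i : Fin n,
      HasSum (fun d : Fin n →₀ ℕ => a i d * ∏ j, x j ^ d j) (φ x i))
    (hcong : ∀ x : Fin n → K, (∀ j, ‖x j‖ ≤ 1) → ∀ i : Fin n, ‖φ x i - x i‖ < 1)
    (hdiv : ∀ (i : Fin n) (d : Fin n →₀ ℕ), 1 < d.sum (fun _ m => m) →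
      ∃ c : K, ‖c‖ ≤ 1 ∧ a i d = r ^ (d.sum (fun _ m => m) - 1) * c)
    (ω : Fin n → K) (hω : ∀ i, ‖ω i‖ ≤ 1) :
    ∃ g : ℤ_[p] → Fin n → K, Continuous g ∧ g 0 = ω ∧
      (∀ z : ℤ_[p], g (z + 1) = φ (g z)) ∧ ∀ z : ℤ_[p], ∀ i : Fin n, ‖g z i‖ ≤ 1 := by
  rcases Nat.eq_zero_or_pos n with rfl | hn
  · exact ⟨fun _ => ω, continuous_const, rfl, fun z => funext fun i => i.elim0,
      fun z i => i.elim0⟩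
  haveI hne : Nonempty (Fin n) := ⟨⟨0, hn⟩⟩
  -- constant coefficient
  have ha0 : ∀ i, a i 0 = φ (fun _ => 0) i := by
    intro i
    have h1 := heval (fun _ => 0) (fun j => by simp) i
    have h2 : (fun d : Fin n →₀ ℕ => a i d * ∏ j, (fun _ => (0:K)) j ^ d j)
        = fun d => if d = 0 then a i 0 else 0 := by
      funext d
      by_cases hd : d = 0
      · subst hd; simp
      · obtain ⟨j, hj⟩ : ∃ j, d j ≠ 0 := by
          by_contra hc; push_neg at hc; exact hd (by ext k; simpa using hc k)
        rw [if_neg hd, Finset.prod_eq_zero (Finset.mem_univ j), mul_zero]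
        exact zero_pow hj
    rw [h2] at h1
    exact ((hasSum_ite_eq 0 (a i 0)).unique h1)
  -- linear coefficients are ≡ δ_{ij} mod 𝔪
  have hlin : ∀ i j : Fin n, ‖a i (Finsupp.single j 1) - (if i = j then 1 else 0)‖ < 1 := by
    intro i j
    set e : Fin n → K := fun k => if k = j then 1 else 0 with he
    have hB : ∀ k, ‖e k‖ ≤ 1 := fun k => by
      by_cases h : k = j <;> simp [he, h]
    have h1 := heval e hB i
    have h2 : HasSum (fun d : Fin n →₀ ℕ =>
        (if d = 0 then a i 0 else 0)
          + (if d = Finsupp.single j 1 then a i (Finsupp.single j 1) else 0))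
        (a i 0 + a i (Finsupp.single j 1)) := (hasSum_ite_eq _ _).add (hasSum_ite_eq _ _)
    have h3 := h1.sub h2
    have hbound : ∀ d : Fin n →₀ ℕ, ‖a i d * ∏ k, e k ^ d k -
        ((if d = 0 then a i 0 else 0)
          + (if d = Finsupp.single j 1 then a i (Finsupp.single j 1) else 0))‖ ≤ ‖r‖ := by
      intro d
      have hsne : Finsupp.single j (1:ℕ) ≠ 0 := (fun h => one_ne_zero (Finsupp.single_eq_zero.mp h))
      rcases aux_classify d with rfl | ⟨j', rfl⟩ | hd
      · rw [if_pos rfl, if_neg (Ne.symm hsne)]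
        simp
      · rw [if_neg ((fun h => one_ne_zero (Finsupp.single_eq_zero.mp h))), aux_mono_single]
        by_cases hjj : j' = j
        · subst hjj
          rw [if_pos rfl, he]
          simp
        · rw [if_neg (fun h => hjj (Finsupp.single_left_injective one_ne_zero h)), he]
          simp [hjj]
      · have hne0 : d ≠ 0 := by
          rintro rfl; simp at hd
        have hne1 : d ≠ Finsupp.single j 1 := by
          rintro rfl; rw [Finsupp.sum_single_index rfl] at hd; omega
        rw [if_neg hne0, if_neg hne1, add_zero, sub_zero, norm_mul]
        obtain ⟨c, hc, hac⟩ := hdiv i d hd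
        rw [hac, norm_mul, norm_pow]
        have hrp : ‖r‖ ^ (d.sum (fun _ m => m) - 1) ≤ ‖r‖ := by
          calc ‖r‖ ^ (d.sum (fun _ m => m) - 1) ≤ ‖r‖ ^ 1 :=
                pow_le_pow_of_le_one (norm_nonneg r) hr.le (by omega)
            _ = ‖r‖ := pow_one _
        have hprod : ‖∏ k, e k ^ d k‖ ≤ 1 := by
          rw [norm_prod]
          exact Finset.prod_le_one (fun k _ => norm_nonneg _)
            (fun k _ => by rw [norm_pow]; exact pow_le_one₀ (norm_nonneg _) (hB k))
        calc ‖r‖ ^ (d.sum (fun _ m => m) - 1) * ‖c‖ * ‖∏ k, e k ^ d k‖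
            ≤ ‖r‖ * 1 * 1 := by
              apply mul_le_mul (mul_le_mul hrp hc (norm_nonneg _) (norm_nonneg _)) hprod
                (norm_nonneg _)
              positivity
          _ = ‖r‖ := by ring
    have h4 : ‖φ e i - (a i 0 + a i (Finsupp.single j 1))‖ ≤ ‖r‖ := by
      rw [← h3.tsum_eq]
      exact IsUltrametricDist.norm_tsum_le_of_forall_le_of_nonneg (norm_nonneg r) hbound
    have hei : e i = (if i = j then (1:K) else 0) := rfl
    have hkey : a i (Finsupp.single j 1) - (if i = j then (1:K) else 0)
        = -(φ e i - (a i 0 + a i (Finsupp.single j 1))) + ((φ e i - e i) + -(a i 0)) := by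
      rw [← hei]; ring
    rw [hkey]
    apply lt_of_le_of_lt (aux_tri3 _ _ _ (max (max ‖r‖ ‖φ e i - e i‖) ‖a i 0‖) ?_ ?_ ?_)
    · apply max_lt (max_lt hr (hcong e hB i)) ?_
      rw [ha0 i]
      simpa using hcong (fun _ => 0) (fun j => by simp) i
    · rw [norm_neg]
      exact h4.trans (le_max_of_le_left (le_max_left _ _))
    · exact le_max_of_le_left (le_max_right _ _)
    · rw [norm_neg]
      exact le_max_right _ _
  -- the contraction constants
  set ρ : ℝ := max ‖r‖ ((Finset.univ : Finset (Fin n × Fin n)).sup' Finset.univ_nonempty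
    fun q => ‖a q.1 (Finsupp.single q.2 1) - (if q.1 = q.2 then 1 else 0)‖) with hρdef
  have hρ0 : 0 ≤ ρ := le_trans (norm_nonneg r) (le_max_left _ _)
  have hρr : ‖r‖ ≤ ρ := le_max_left _ _
  have hρa : ∀ i j, ‖a i (Finsupp.single j 1) - (if i = j then 1 else 0)‖ ≤ ρ := fun i j =>
    le_trans (Finset.le_sup' (f := fun q : Fin n × Fin n =>
      ‖a q.1 (Finsupp.single q.2 1) - (if q.1 = q.2 then 1 else 0)‖) (Finset.mem_univ (i, j)))
      (le_max_right _ _)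
  have hρ1 : ρ < 1 := max_lt hr ((Finset.sup'_lt_iff _).mpr fun q _ => hlin q.1 q.2)
  have hp1 : ‖(p : K)‖ < 1 := by
    have h1 : ((p : ℕ) : K) = algebraMap ℚ_[p] K ((p : ℕ) : ℚ_[p]) :=
      (map_natCast (algebraMap ℚ_[p] K) p).symm
    rw [h1, norm_algebraMap', Padic.norm_p]
    rw [inv_lt_one_iff₀]
    right
    exact_mod_cast (Fact.out : p.Prime).one_lt
  set κ : ℝ := max ρ ‖(p : K)‖ with hκdef
  have hκ0 : 0 ≤ κ := le_trans hρ0 (le_max_left _ _)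
  have hκ1 : κ < 1 := max_lt hρ1 hp1
  -- φ maps the unit polydisc to itself
  have hB1 : ∀ x : Fin n → K, (∀ j, ‖x j‖ ≤ 1) → ∀ i, ‖φ x i‖ ≤ 1 := by
    intro x hx i
    calc ‖φ x i‖ = ‖(φ x i - x i) + x i‖ := by ring_nf
      _ ≤ 1 := aux_tri2 _ _ _ ((hcong x hx i).le) (hx i)
  -- φ is 1-Lipschitz on the polydisc
  have hlip : ∀ x y : Fin n → K, (∀ j, ‖x j‖ ≤ 1) → (∀ j, ‖y j‖ ≤ 1) → ∀ ε : ℝ, 0 ≤ ε →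
      (∀ j, ‖x j - y j‖ ≤ ε) → ∀ i, ‖φ x i - φ y i‖ ≤ ε := by
    intro x y hx hy ε hε hxy i
    have h1 := (heval x hx i).sub (heval y hy i)
    rw [← h1.tsum_eq]
    apply IsUltrametricDist.norm_tsum_le_of_forall_le_of_nonneg hε
    intro d
    rw [← mul_sub, norm_mul]
    calc ‖a i d‖ * ‖∏ j, x j ^ d j - ∏ j, y j ^ d j‖ ≤ 1 * ε :=
          mul_le_mul (ha i d) (aux_prod_sub x y hx hy hε hxy d) (norm_nonneg _) zero_le_one
      _ = ε := one_mul ε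
  -- φ is ρ-close to a translation on the polydisc
  have hqid : ∀ x y : Fin n → K, (∀ j, ‖x j‖ ≤ 1) → (∀ j, ‖y j‖ ≤ 1) → ∀ ε : ℝ, 0 ≤ ε →
      (∀ j, ‖x j - y j‖ ≤ ε) → ∀ i, ‖φ x i - φ y i - (x i - y i)‖ ≤ ρ * ε := by
    intro x y hx hy ε hε hxy i
    have h1 := ((heval x hx i).sub (heval y hy i)).sub
      (hasSum_ite_eq (Finsupp.single i 1) (x i - y i))
    rw [← h1.tsum_eq]
    apply IsUltrametricDist.norm_tsum_le_of_forall_le_of_nonneg (mul_nonneg hρ0 hε)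
    intro d
    have hsne : Finsupp.single i (1:ℕ) ≠ 0 := fun h => one_ne_zero (Finsupp.single_eq_zero.mp h)
    rcases aux_classify d with hd0 | ⟨jj, hdj⟩ | hd
    · subst hd0
      rw [if_neg (Ne.symm hsne)]
      have e1 : ∏ k, x k ^ (0 : Fin n →₀ ℕ) k = 1 := by simp
      have e2 : ∏ k, y k ^ (0 : Fin n →₀ ℕ) k = 1 := by simp
      rw [e1, e2, sub_zero, sub_self, norm_zero]
      exact mul_nonneg hρ0 hε
    · subst hdj
      rw [aux_mono_single, aux_mono_single]
      by_cases hji : jj = i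
      · subst hji
        rw [if_pos rfl]
        have e : a jj (Finsupp.single jj 1) * x jj - a jj (Finsupp.single jj 1) * y jj
              - (x jj - y jj)
            = (a jj (Finsupp.single jj 1) - (if jj = jj then 1 else 0)) * (x jj - y jj) := by
          rw [if_pos rfl]; ring
        rw [e, norm_mul]
        exact mul_le_mul (hρa jj jj) (hxy jj) (norm_nonneg _) hρ0
      · rw [if_neg (fun h => hji (Finsupp.single_left_injective one_ne_zero h))]
        have e : a i (Finsupp.single jj 1) * x jj - a i (Finsupp.single jj 1) * y jj - 0
            = (a i (Finsupp.single jj 1) - (if i = jj then 1 else 0)) * (x jj - y jj) := by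
          rw [if_neg (fun h => hji h.symm)]; ring
        rw [e, norm_mul]
        exact mul_le_mul (hρa i jj) (hxy jj) (norm_nonneg _) hρ0
    · have hne1 : d ≠ Finsupp.single i 1 := by
        rintro rfl; rw [Finsupp.sum_single_index rfl] at hd; omega
      rw [if_neg hne1, sub_zero, ← mul_sub, norm_mul]
      obtain ⟨c, hc, hac⟩ := hdiv i d hd
      rw [hac, norm_mul, norm_pow]
      have hrp : ‖r‖ ^ (d.sum (fun _ m => m) - 1) ≤ ρ := by
        calc ‖r‖ ^ (d.sum (fun _ m => m) - 1) ≤ ‖r‖ ^ 1 :=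
              pow_le_pow_of_le_one (norm_nonneg r) hr.le (by omega)
          _ = ‖r‖ := pow_one _
          _ ≤ ρ := hρr
      calc ‖r‖ ^ (d.sum (fun _ m => m) - 1) * ‖c‖ * ‖∏ j, x j ^ d j - ∏ j, y j ^ d j‖
          ≤ ρ * 1 * ε := by
            apply mul_le_mul (mul_le_mul hrp hc (norm_nonneg _) hρ0)
              (aux_prod_sub x y hx hy hε hxy d) (norm_nonneg _)
            positivity
        _ = ρ * ε := by ring
  -- iterates stay in the polydisc
  have hBit : ∀ (x : Fin n → K), (∀ j, ‖x j‖ ≤ 1) → ∀ (m : ℕ) (j : Fin n), ‖φ^[m] x j‖ ≤ 1 := by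
    intro x hx m
    induction m with
    | zero => simpa using hx
    | succ m ih => rw [Function.iterate_succ_apply']; exact hB1 _ ih
  -- iterates are 1-Lipschitz
  have hlipIt : ∀ (m : ℕ) (x y : Fin n → K), (∀ j, ‖x j‖ ≤ 1) → (∀ j, ‖y j‖ ≤ 1) →
      ∀ ε : ℝ, 0 ≤ ε → (∀ j, ‖x j - y j‖ ≤ ε) → ∀ i, ‖φ^[m] x i - φ^[m] y i‖ ≤ ε := by
    intro m
    induction m with
    | zero => intro x y hx hy ε hε hxy i; simpa using hxy i
    | succ m ih =>
      intro x y hx hy ε hε hxy i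
      rw [Function.iterate_succ_apply', Function.iterate_succ_apply']
      exact hlip _ _ (hBit x hx m) (hBit y hy m) ε hε (ih x y hx hy ε hε hxy) i
  -- iterates are ρ-close to translations
  have hqidIt : ∀ (m : ℕ) (x y : Fin n → K), (∀ j, ‖x j‖ ≤ 1) → (∀ j, ‖y j‖ ≤ 1) →
      ∀ ε : ℝ, 0 ≤ ε → (∀ j, ‖x j - y j‖ ≤ ε) → ∀ i,
      ‖φ^[m] x i - φ^[m] y i - (x i - y i)‖ ≤ ρ * ε := by
    intro m
    induction m with
    | zero =>
      intro x y hx hy ε hε hxy i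
      simpa using mul_nonneg hρ0 hε
    | succ m ih =>
      intro x y hx hy ε hε hxy i
      rw [Function.iterate_succ_apply', Function.iterate_succ_apply']
      have key : φ (φ^[m] x) i - φ (φ^[m] y) i - (x i - y i)
          = (φ (φ^[m] x) i - φ (φ^[m] y) i - (φ^[m] x i - φ^[m] y i))
            + (φ^[m] x i - φ^[m] y i - (x i - y i)) := by ring
      rw [key]
      exact aux_tri2 _ _ _
        (hqid _ _ (hBit x hx m) (hBit y hy m) ε hε (hlipIt m x y hx hy ε hε hxy) i)
        (ih x y hx hy ε hε hxy i)
  -- the key p-th power contraction step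
  have hstep : ∀ (M : ℕ) (x : Fin n → K), (∀ j, ‖x j‖ ≤ 1) → ∀ ε : ℝ, 0 ≤ ε →
      (∀ i, ‖φ^[M] x i - x i‖ ≤ ε) → ∀ i, ‖φ^[M * p] x i - x i‖ ≤ κ * ε := by
    intro M x hx ε hε h i
    have hyB : ∀ j, ‖φ^[M] x j‖ ≤ 1 := hBit x hx M
    have e0 : φ^[M * p] x i - x i = ∑ t ∈ Finset.range p, ((φ^[M])^[t+1] x i - (φ^[M])^[t] x i) := by
      rw [Finset.sum_range_sub (fun t => (φ^[M])^[t] x i)]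
      rw [Function.iterate_mul]
      simp
    have e1 : ∀ t : ℕ, (φ^[M])^[t+1] x i - (φ^[M])^[t] x i
        = (φ^[M] x i - x i)
          + (φ^[M * t] (φ^[M] x) i - φ^[M * t] x i - (φ^[M] x i - x i)) := by
      intro t
      rw [Function.iterate_succ_apply, ← Function.iterate_mul]
      ring
    rw [e0, Finset.sum_congr rfl (fun t _ => e1 t), Finset.sum_add_distrib,
      Finset.sum_const, Finset.card_range, nsmul_eq_mul]
    apply aux_tri2
    · rw [norm_mul]
      exact mul_le_mul (le_max_right _ _) (h i) (norm_nonneg _) hκ0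
    · apply le_trans (IsUltrametricDist.norm_sum_le_of_forall_le_of_nonneg
        (mul_nonneg hρ0 hε) (fun t _ => hqidIt (M * t) _ _ hyB hx ε hε h i))
      exact mul_le_mul_of_nonneg_right (le_max_left _ _) hε
  -- iterating: φ^[p^s] is κ^s-close to the identity on the polydisc
  have hpow : ∀ (s : ℕ) (x : Fin n → K), (∀ j, ‖x j‖ ≤ 1) → ∀ i,
      ‖φ^[p^s] x i - x i‖ ≤ κ ^ s := by
    intro s
    induction s with
    | zero =>
      intro x hx i
      simp only [pow_zero, Function.iterate_one]
      exact (hcong x hx i).le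
    | succ s ih =>
      intro x hx i
      rw [pow_succ]
      calc ‖φ^[p^s * p] x i - x i‖ ≤ κ * κ ^ s :=
            hstep (p^s) x hx (κ ^ s) (pow_nonneg hκ0 s) (fun i => ih x hx i) i
        _ = κ ^ s * κ := mul_comm _ _
  -- multiples of p^s along the orbit of ω
  have horb : ∀ (s k : ℕ) (i : Fin n), ‖φ^[p^s * k] ω i - ω i‖ ≤ κ ^ s := by
    intro s k
    induction k with
    | zero =>
      intro i
      simpa using pow_nonneg hκ0 s
    | succ k ih =>
      intro i
      have e : p ^ s * (k + 1) = p ^ s + p ^ s * k := by ring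
      rw [e, Function.iterate_add_apply]
      have hyB : ∀ j, ‖φ^[p ^ s * k] ω j‖ ≤ 1 := hBit ω hω _
      have key : φ^[p ^ s] (φ^[p ^ s * k] ω) i - ω i
          = (φ^[p ^ s] (φ^[p ^ s * k] ω) i - φ^[p ^ s * k] ω i)
            + (φ^[p ^ s * k] ω i - ω i) := by ring
      rw [key]
      exact aux_tri2 _ _ _ (hpow s _ hyB i) (ih i)
  -- uniform p-adic continuity of the orbit
  have hunif : ∀ (m t s : ℕ) (i : Fin n), ‖φ^[m + p^s * t] ω i - φ^[m] ω i‖ ≤ κ ^ s := by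
    intro m t s i
    rw [Function.iterate_add_apply]
    exact hlipIt m _ ω (hBit ω hω _) hω (κ ^ s) (pow_nonneg hκ0 s) (fun j => horb s t j) i
  -- orbit values at p-adically close times are close
  have hcongru : ∀ (k m m' : ℕ), ((m' : ℤ_[p]) - (m : ℤ_[p])) ∈ Ideal.span {(p : ℤ_[p]) ^ k} →
      ∀ i, ‖φ^[m'] ω i - φ^[m] ω i‖ ≤ κ ^ k := by
    have key : ∀ (k m m' : ℕ), m ≤ m' →
        ((m' : ℤ_[p]) - (m : ℤ_[p])) ∈ Ideal.span {(p : ℤ_[p]) ^ k} →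
        ∀ i, ‖φ^[m'] ω i - φ^[m] ω i‖ ≤ κ ^ k := by
      intro k m m' hmm hsp i
      have h1 : ‖((m' : ℤ_[p]) - (m : ℤ_[p]))‖ ≤ (p : ℝ) ^ (-k : ℤ) :=
        (PadicInt.norm_le_pow_iff_mem_span_pow _ k).mpr hsp
      have h2 : ((p : ℤ) ^ k) ∣ ((m' : ℤ) - (m : ℤ)) := by
        rw [← PadicInt.norm_int_le_pow_iff_dvd]
        push_cast
        exact h1
      obtain ⟨t, ht⟩ := h2
      have hppos : (0 : ℤ) < (p : ℤ) ^ k :=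
        pow_pos (by exact_mod_cast (Fact.out : p.Prime).pos) k
      have ht0 : 0 ≤ t := by
        have h3 : (0 : ℤ) ≤ (p : ℤ) ^ k * t := by
          rw [← ht]
          have : (m : ℤ) ≤ (m' : ℤ) := by exact_mod_cast hmm
          omega
        nlinarith
      have hm' : m' = m + p ^ k * t.toNat := by
        have h4 : (m' : ℤ) = (m : ℤ) + (p : ℤ) ^ k * t := by omega
        have h5 : ((m + p ^ k * t.toNat : ℕ) : ℤ) = (m : ℤ) + (p : ℤ) ^ k * t := by
          push_cast [Int.toNat_of_nonneg ht0]
          ring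
        exact_mod_cast h4.trans h5.symm
      rw [hm']
      exact hunif m t.toNat k i
    intro k m m' hsp i
    rcases le_total m m' with h | h
    · exact key k m m' h hsp i
    · rw [norm_sub_rev]
      refine key k m' m h ?_ i
      have h6 : -((m' : ℤ_[p]) - (m : ℤ_[p])) ∈ Ideal.span {(p : ℤ_[p]) ^ k} := neg_mem hsp
      rwa [neg_sub] at h6
  -- successive approximations
  have happr : ∀ (z : ℤ_[p]) (k k' : ℕ), k ≤ k' →
      ((z.appr k' : ℤ_[p]) - (z.appr k : ℤ_[p])) ∈ Ideal.span {(p : ℤ_[p]) ^ k} := by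
    intro z k k' hk
    have h1 := PadicInt.appr_spec k z
    have h3 : (z - (z.appr k' : ℤ_[p])) ∈ Ideal.span {(p : ℤ_[p]) ^ k} :=
      Ideal.span_singleton_le_span_singleton.mpr (pow_dvd_pow _ hk) (PadicInt.appr_spec k' z)
    have h4 := Ideal.sub_mem _ h1 h3
    have e : (z - (z.appr k : ℤ_[p])) - (z - (z.appr k' : ℤ_[p]))
        = (z.appr k' : ℤ_[p]) - (z.appr k : ℤ_[p]) := by ring
    rwa [e] at h4
  haveI : CompleteSpace K := FiniteDimensional.complete ℚ_[p] K
  have hκlim : Tendsto (fun k : ℕ => κ ^ k) atTop (𝓝 0) :=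
    tendsto_pow_atTop_nhds_zero_of_lt_one hκ0 hκ1
  -- the approximating sequence is Cauchy
  have hcauchy : ∀ z : ℤ_[p], ∃ L : Fin n → K,
      Tendsto (fun k => φ^[z.appr k] ω) atTop (𝓝 L) := by
    intro z
    apply cauchySeq_tendsto_of_complete
    rw [Metric.cauchySeq_iff']
    intro ε hε
    obtain ⟨N, hN⟩ := (hκlim.eventually (gt_mem_nhds hε)).exists
    refine ⟨N, fun k hk => ?_⟩
    have hle : dist (φ^[z.appr k] ω) (φ^[z.appr N] ω) ≤ κ ^ N := by
      rw [dist_pi_le_iff (pow_nonneg hκ0 N)]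
      intro i
      rw [dist_eq_norm]
      exact hcongru N _ _ (happr z N k hk) i
    exact lt_of_le_of_lt hle hN
  choose g hg using hcauchy
  -- rate of convergence
  have hrate : ∀ (z : ℤ_[p]) (k : ℕ) (i : Fin n), ‖g z i - φ^[z.appr k] ω i‖ ≤ κ ^ k := by
    intro z k i
    have htend : Tendsto (fun k' => φ^[z.appr k'] ω i) atTop (𝓝 (g z i)) :=
      tendsto_pi_nhds.mp (hg z) i
    apply le_of_tendsto ((htend.sub tendsto_const_nhds).norm)
    filter_upwards [eventually_ge_atTop k] with k' hk'
    exact hcongru k _ _ (happr z k k' hk') i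
  -- g takes values in the polydisc
  have hgball : ∀ (z : ℤ_[p]) (i : Fin n), ‖g z i‖ ≤ 1 := by
    intro z i
    apply le_of_tendsto ((tendsto_pi_nhds.mp (hg z) i).norm)
    filter_upwards with k using hBit ω hω _ i
  -- elements with norm below every κ^k vanish
  have hzero : ∀ c : K, (∀ k : ℕ, ‖c‖ ≤ κ ^ k) → c = 0 := by
    intro c hc
    have h1 : ‖c‖ ≤ 0 := ge_of_tendsto hκlim (Filter.Eventually.of_forall hc)
    exact norm_le_zero_iff.mp h1
  -- g interpolates the orbit
  have hgnat : ∀ m : ℕ, g (m : ℤ_[p]) = φ^[m] ω := by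
    intro m
    funext i
    have hb : ∀ k : ℕ, ‖g (m : ℤ_[p]) i - φ^[m] ω i‖ ≤ κ ^ k := by
      intro k
      have h2 : ‖φ^[((m : ℤ_[p])).appr k] ω i - φ^[m] ω i‖ ≤ κ ^ k := by
        refine hcongru k m _ ?_ i
        have h3 := PadicInt.appr_spec k (m : ℤ_[p])
        have h4 := neg_mem h3
        rwa [neg_sub] at h4
      have e : g (m : ℤ_[p]) i - φ^[m] ω i
          = (g (m : ℤ_[p]) i - φ^[((m : ℤ_[p])).appr k] ω i)
            + (φ^[((m : ℤ_[p])).appr k] ω i - φ^[m] ω i) := by ring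
      rw [e]
      exact aux_tri2 _ _ _ (hrate _ k i) h2
    exact sub_eq_zero.mp (hzero _ hb)
  refine ⟨g, ?_, ?_, ?_, hgball⟩
  · -- continuity
    rw [Metric.continuous_iff]
    intro z ε hε
    obtain ⟨k, hk⟩ := (hκlim.eventually (gt_mem_nhds hε)).exists
    have hppos : (0:ℝ) < (p : ℝ) ^ (-k : ℤ) :=
      zpow_pos (by exact_mod_cast (Fact.out : p.Prime).pos) _
    refine ⟨(p : ℝ) ^ (-k : ℤ), hppos, fun z' hz' => ?_⟩
    have hmem : (z' - z) ∈ Ideal.span {(p : ℤ_[p]) ^ k} := by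
      rw [← PadicInt.norm_le_pow_iff_mem_span_pow]
      rw [dist_eq_norm] at hz'
      exact hz'.le
    have hm : ((z'.appr k : ℤ_[p]) - (z.appr k : ℤ_[p])) ∈ Ideal.span {(p : ℤ_[p]) ^ k} := by
      have h1 := PadicInt.appr_spec k z'
      have h2 := PadicInt.appr_spec k z
      have h3 := Ideal.sub_mem _ (Ideal.add_mem _ hmem h2) h1
      have e : (z' - z + (z - (z.appr k : ℤ_[p]))) - (z' - (z'.appr k : ℤ_[p]))
          = (z'.appr k : ℤ_[p]) - (z.appr k : ℤ_[p]) := by ring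
      rwa [e] at h3
    have hd : dist (g z') (g z) ≤ κ ^ k := by
      rw [dist_pi_le_iff (pow_nonneg hκ0 k)]
      intro i
      rw [dist_eq_norm]
      have e : g z' i - g z i
          = (g z' i - φ^[z'.appr k] ω i)
            + ((φ^[z'.appr k] ω i - φ^[z.appr k] ω i) + (φ^[z.appr k] ω i - g z i)) := by ring
      rw [e]
      refine aux_tri3 _ _ _ _ (hrate z' k i) (hcongru k _ _ hm i) ?_
      rw [norm_sub_rev]
      exact hrate z k i
    exact lt_of_le_of_lt hd hk
  · -- value at 0
    have h0 := hgnat 0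
    simpa using h0
  · -- functional equation
    intro z
    funext i
    have hb : ∀ k : ℕ, ‖g (z + 1) i - φ (g z) i‖ ≤ κ ^ k := by
      intro k
      have h1 : ‖g (z + 1) i - φ^[(z + 1).appr k] ω i‖ ≤ κ ^ k := hrate _ k i
      have h2 : ‖φ^[(z + 1).appr k] ω i - φ^[z.appr k + 1] ω i‖ ≤ κ ^ k := by
        refine hcongru k (z.appr k + 1) _ ?_ i
        have ha1 := PadicInt.appr_spec k (z + 1)
        have ha2 := PadicInt.appr_spec k z
        have h3 := Ideal.sub_mem _ ha2 ha1
        have e : (z - (z.appr k : ℤ_[p])) - ((z + 1) - ((z + 1).appr k : ℤ_[p]))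
            = (((z + 1).appr k : ℤ_[p])) - ((z.appr k + 1 : ℕ) : ℤ_[p]) := by
          push_cast
          ring
        rwa [e] at h3
      have h3 : ‖φ^[z.appr k + 1] ω i - φ (g z) i‖ ≤ κ ^ k := by
        rw [Function.iterate_succ_apply']
        refine hlip (φ^[z.appr k] ω) (g z) (hBit ω hω _) (hgball z) (κ ^ k)
          (pow_nonneg hκ0 k) (fun j => ?_) i
        rw [norm_sub_rev]
        exact hrate z k j
      have e : g (z + 1) i - φ (g z) i
          = (g (z + 1) i - φ^[(z + 1).appr k] ω i)
            + ((φ^[(z + 1).appr k] ω i - φ^[z.appr k + 1] ω i)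
              + (φ^[z.appr k + 1] ω i - φ (g z) i)) := by ring
      rw [e]
      exact aux_tri3 _ _ _ _ h1 h2 h3
    exact sub_eq_zero.mp (hzero _ hb)
end

section
/- Suppose g : Z_p → O^n is continuous, analytic on p^l Z_p, and satisfies g(z+1) = ψ(g(z)) for a map ψ : O^n → O^n. If the orbit {ψ^m(ω)}_{m∈ℕ} of ω = g(0) is finite, then ψ^{p^l}(ω) = ω. -/
/-- If `g : ℤ_p → O^n` is continuous, analytic on `p^l ℤ_p` (each coordinate of
`z ↦ g(p^l z)` is given by a convergent power series), interpolates the orbit of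
`ω = g(0)` under `ψ`, and this orbit is finite, then `ψ^{p^l}(ω) = ω`. -/
theorem periodic_of_finite_orbit_of_analytic_interpolation (p : ℕ) [Fact p.Prime]
    (K : Type*) [NontriviallyNormedField K] [NormedAlgebra ℚ_[p] K]
    [FiniteDimensional ℚ_[p] K] (n l : ℕ) (hl : 1 ≤ l)
    (ψ : (Fin n → K) → (Fin n → K)) (g : ℤ_[p] → Fin n → K) (hcont : Continuous g)
    (hbdd : ∀ z : ℤ_[p], ∀ i : Fin n, ‖g z i‖ ≤ 1)
    (a : Fin n → ℕ → K)
    (han : ∀ z : ℤ_[p], ∀ i : Fin n,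
      HasSum (fun m : ℕ => a i m * (algebraMap ℚ_[p] K (z : ℚ_[p])) ^ m)
        (g ((p : ℤ_[p]) ^ l * z) i))
    (horb : ∀ m : ℕ, g (m : ℤ_[p]) = ψ^[m] (g 0))
    (hfin : (Set.range fun m : ℕ => ψ^[m] (g 0)).Finite) :
    ψ^[p ^ l] (g 0) = g 0 := by
  classical
  have hp2 : 2 ≤ p := (Fact.out : p.Prime).two_le
  set O : Set (Fin n → K) := Set.range fun m : ℕ => ψ^[m] (g 0) with hO
  -- Step A : g takes values in O
  have hstepA : ∀ z : ℤ_[p], g z ∈ O := by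
    intro z
    have hz : z ∈ closure (Set.range (Nat.cast : ℕ → ℤ_[p])) :=
      PadicInt.denseRange_natCast z
    have hmap : Set.MapsTo g (Set.range (Nat.cast : ℕ → ℤ_[p])) O := by
      rintro _ ⟨m, rfl⟩
      exact ⟨m, (horb m).symm⟩
    have := map_mem_closure hcont hz hmap
    rwa [hfin.isClosed.closure_eq] at this
  -- Step B : g is constant near 0
  obtain ⟨δ, hδpos, hδ⟩ : ∃ δ > 0, ∀ z : ℤ_[p], ‖z‖ < δ → g z = g 0 := by
    have hC : IsClosed (O \ {g 0}) := (hfin.diff).isClosed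
    have hopen : IsOpen (g ⁻¹' (O \ {g 0})ᶜ) := hC.isOpen_compl.preimage hcont
    have h0mem : (0 : ℤ_[p]) ∈ g ⁻¹' (O \ {g 0})ᶜ := by simp
    obtain ⟨δ, hδpos, hball⟩ := Metric.isOpen_iff.1 hopen 0 h0mem
    refine ⟨δ, hδpos, fun z hz => ?_⟩
    have hz' : z ∈ Metric.ball (0 : ℤ_[p]) δ := by
      simpa [Metric.mem_ball, dist_eq_norm] using hz
    have h1 := hball hz'
    have h2 := hstepA z
    simp only [Set.mem_preimage, Set.mem_compl_iff, Set.mem_diff,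
      Set.mem_singleton_iff, not_and, not_not] at h1
    exact h1 h2
  -- basic constants
  set q : ℝ := (p : ℝ)⁻¹ with hq
  have hp0 : (0:ℝ) < p := by positivity
  have hq0 : 0 < q := by positivity
  have hq1 : q < 1 := by
    rw [hq, inv_lt_one_iff₀]
    right; exact_mod_cast lt_of_lt_of_le one_lt_two (by exact_mod_cast hp2)
  have hqhalf : q ≤ 2⁻¹ := by
    rw [hq]
    apply inv_anti₀ two_pos
    exact_mod_cast hp2
  -- the norm of the points we plug in
  have hxnorm : ∀ j : ℕ,
      ‖algebraMap ℚ_[p] K (((p : ℤ_[p]) ^ j : ℤ_[p]) : ℚ_[p])‖ = q ^ j := by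
    intro j
    rw [Algebra.algebraMap_eq_smul_one, norm_smul, norm_one, mul_one]
    have h1 : (((p : ℤ_[p]) ^ j : ℤ_[p]) : ℚ_[p]) = (p : ℚ_[p]) ^ j := by push_cast; ring
    rw [h1, norm_pow, Padic.norm_p]
  -- a i 0 = g 0 i
  have ha0 : ∀ i : Fin n, a i 0 = g 0 i := by
    intro i
    have h0 : HasSum (fun m : ℕ => a i m * (0 : K) ^ m) (g 0 i) := by
      have := han 0 i
      simpa using this
    have h1 : HasSum (fun m : ℕ => a i m * (0 : K) ^ m) (a i 0 * (0:K) ^ 0) :=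
      hasSum_single 0 (fun b hb => by simp [zero_pow hb])
    have h2 := h0.unique h1
    simp at h2
    exact h2.symm
  -- the key coefficient vanishing
  have hcoef : ∀ i : Fin n, ∀ m : ℕ, a i (m + 1) = 0 := by
    intro i
    -- bound on coefficients
    have hsum1 : Summable fun m : ℕ => a i m := by
      have := (han 1 i).summable
      simpa using this
    have htend : Filter.Tendsto (fun m : ℕ => ‖a i m‖) Filter.atTop (nhds 0) := by
      simpa using hsum1.tendsto_atTop_zero.norm
    obtain ⟨B, hB⟩ : ∃ B : ℝ, ∀ m : ℕ, ‖a i m‖ ≤ B := by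
      obtain ⟨B, hB⟩ := htend.bddAbove_range
      exact ⟨B, fun m => hB ⟨m, rfl⟩⟩
    have hB0 : 0 ≤ B := le_trans (norm_nonneg _) (hB 0)
    intro m
    induction m using Nat.strong_induction_on with
    | _ m ih =>
      -- for every suitable j we get a bound
      have hbound : ∀ j : ℕ, 1 ≤ j → q ^ j < δ → ‖a i (m+1)‖ ≤ 2 * B * q ^ j := by
        intro j hj1 hjδ
        set x : K := algebraMap ℚ_[p] K (((p : ℤ_[p]) ^ j : ℤ_[p]) : ℚ_[p]) with hxdef
        set r : ℝ := q ^ j with hrdef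
        have hr0 : 0 < r := pow_pos hq0 j
        have hr1 : r < 1 := pow_lt_one₀ hq0.le hq1 (by omega)
        have hrhalf : r ≤ 2⁻¹ := by
          calc r ≤ q ^ 1 := pow_le_pow_of_le_one hq0.le hq1.le hj1
          _ = q := pow_one q
          _ ≤ 2⁻¹ := hqhalf
        have hxn : ‖x‖ = r := hxnorm j
        -- value of g at p^l * p^j
        have hgval : g ((p : ℤ_[p]) ^ l * (p : ℤ_[p]) ^ j) = g 0 := by
          apply hδ
          have h1 : ‖(p : ℤ_[p]) ^ l * (p : ℤ_[p]) ^ j‖ = q ^ (l + j) := by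
            rw [← pow_add, PadicInt.norm_def]
            have h2 : (((p : ℤ_[p]) ^ (l+j) : ℤ_[p]) : ℚ_[p]) = (p : ℚ_[p]) ^ (l+j) := by
              push_cast; ring
            rw [h2, norm_pow, Padic.norm_p]
          rw [h1]
          calc q ^ (l + j) ≤ q ^ j :=
            pow_le_pow_of_le_one hq0.le hq1.le (by omega)
          _ < δ := hjδ
        set S : ℕ → K := fun m' : ℕ => a i m' * x ^ m' with hSdef
        have hS : HasSum S (g 0 i) := by
          have := han ((p : ℤ_[p]) ^ j) i
          rwa [hgval] at this
        -- the head of the series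
        have hfs : ∑ k ∈ Finset.range (m+1), S k = g 0 i := by
          rw [Finset.sum_eq_single 0]
          · simp [hSdef, ha0 i]
          · intro k hk hk0
            obtain ⟨k', rfl⟩ := Nat.exists_eq_succ_of_ne_zero hk0
            have hk' : k' < m := by
              have := Finset.mem_range.1 hk; omega
            simp [hSdef, ih k' hk']
          · simp
        have hT : HasSum (fun n' : ℕ => S (n' + (m+1))) 0 := by
          have h1 := (hasSum_nat_add_iff' (m+1)).2 hS
          rwa [hfs, sub_self] at h1
        have hT1 : HasSum (fun n' : ℕ => S (n' + 1 + (m+1))) (0 - S (0 + (m+1))) := by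
          have h1 := (hasSum_nat_add_iff' (f := fun n' : ℕ => S (n' + (m+1))) 1).2 hT
          simpa using h1
        -- norm estimates
        have hterm : ∀ n' : ℕ, ‖S (n' + 1 + (m+1))‖ ≤ B * r ^ (m+2) * r ^ n' := by
          intro n'
          have : ‖S (n' + 1 + (m+1))‖ = ‖a i (n' + 1 + (m+1))‖ * r ^ (n' + 1 + (m+1)) := by
            rw [hSdef]; rw [norm_mul, norm_pow, hxn]
          rw [this]
          have h2 : r ^ (n' + 1 + (m+1)) = r ^ (m+2) * r ^ n' := by ring
          rw [h2, ← mul_assoc]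
          apply mul_le_mul_of_nonneg_right _ (pow_nonneg hr0.le _)
          exact mul_le_mul_of_nonneg_right (hB _) (pow_nonneg hr0.le _)
        have hgeo : Summable (fun n' : ℕ => B * r ^ (m+2) * r ^ n') :=
          (summable_geometric_of_lt_one hr0.le hr1).mul_left _
        have hns : Summable (fun n' : ℕ => ‖S (n' + 1 + (m+1))‖) :=
          Summable.of_nonneg_of_le (fun _ => norm_nonneg _) hterm hgeo
        have hnormle : ‖S (0 + (m+1))‖ ≤ B * r ^ (m+2) * (1 - r)⁻¹ := by
          have h1 : ∑' n', S (n' + 1 + (m+1)) = 0 - S (0 + (m+1)) := hT1.tsum_eq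
          calc ‖S (0 + (m+1))‖ = ‖∑' n', S (n' + 1 + (m+1))‖ := by
                rw [h1, zero_sub, norm_neg]
          _ ≤ ∑' n', ‖S (n' + 1 + (m+1))‖ := norm_tsum_le_tsum_norm hns
          _ ≤ ∑' n', B * r ^ (m+2) * r ^ n' := Summable.tsum_le_tsum hterm hns hgeo
          _ = B * r ^ (m+2) * (1 - r)⁻¹ := by
                rw [tsum_mul_left, tsum_geometric_of_lt_one hr0.le hr1]
        have hSnorm : ‖S (0 + (m+1))‖ = ‖a i (m+1)‖ * r ^ (m+1) := by
          rw [hSdef]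
          simp only [zero_add]
          rw [norm_mul, norm_pow, hxn]
        have hfrac : (1 - r)⁻¹ ≤ 2 := by
          rw [inv_le_comm₀ (by linarith) (by norm_num)]
          linarith
        have hkey : ‖a i (m+1)‖ * r ^ (m+1) ≤ 2 * B * r * r ^ (m+1) := by
          calc ‖a i (m+1)‖ * r ^ (m+1) ≤ B * r ^ (m+2) * (1 - r)⁻¹ := by
                rw [← hSnorm]; exact hnormle
          _ ≤ B * r ^ (m+2) * 2 := by
                apply mul_le_mul_of_nonneg_left hfrac
                positivity
          _ = 2 * B * r * r ^ (m+1) := by ring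
        have := le_of_mul_le_mul_right (by simpa using hkey) (pow_pos hr0 (m+1))
        exact this
      -- let j → ∞
      obtain ⟨J, hJ⟩ := exists_pow_lt_of_lt_one hδpos hq1
      have hlim : Filter.Tendsto (fun j : ℕ => 2 * B * q ^ j) Filter.atTop (nhds 0) := by
        simpa using (tendsto_pow_atTop_nhds_zero_of_lt_one hq0.le hq1).const_mul (2 * B)
      have hle : ‖a i (m+1)‖ ≤ 0 := by
        apply ge_of_tendsto hlim
        filter_upwards [Filter.eventually_ge_atTop (max 1 (J+1))] with j hj
        have hj1 : 1 ≤ j := le_trans (le_max_left _ _) hj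
        have hjδ : q ^ j < δ :=
          lt_of_le_of_lt (pow_le_pow_of_le_one hq0.le hq1.le
            (le_trans (Nat.le_succ J) (le_trans (le_max_right _ _) hj))) hJ
        exact hbound j hj1 hjδ
      exact norm_le_zero_iff.1 hle
  -- conclusion
  have h1 : ψ^[p ^ l] (g 0) = g ((p : ℤ_[p]) ^ l * 1) := by
    rw [← horb (p ^ l)]
    congr 1
    push_cast
    ring
  rw [h1]
  funext i
  have hS1 : HasSum (fun m : ℕ => a i m) (g ((p : ℤ_[p]) ^ l * 1) i) := by
    have := han 1 i
    simpa using this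
  have hS2 : HasSum (fun m : ℕ => a i m) (a i 0) :=
    hasSum_single 0 (fun b hb => by
      obtain ⟨k, rfl⟩ := Nat.exists_eq_succ_of_ne_zero hb
      exact hcoef i k)
  rw [hS1.unique hS2, ha0 i]
end

section
/- Let g : Z_p → K be continuous and analytic on p^l Z_p (K a finite extension of Q_p). If g takes some value at infinitely many points of p^l ℕ := {p^l m : m ∈ ℕ}, then g is constant on p^l Z_p. -/
open Filter Topology IsUltrametricDist

section Helpers
variable {K : Type*} [NontriviallyNormedField K] [IsUltrametricDist K] [CompleteSpace K]

lemma str_summable {ι : Type*} {f : ι → K} (hf : Tendsto f cofinite (𝓝 0)) : Summable f :=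
  NonarchimedeanAddGroup.summable_of_tendsto_cofinite_zero hf

lemma str_term_tendsto {x : K} (hx : ‖x‖ ≤ 1) {b : ℕ → K} (hb : Tendsto b cofinite (𝓝 0)) :
    Tendsto (fun m => b m * x ^ m) cofinite (𝓝 0) := by
  rw [tendsto_zero_iff_norm_tendsto_zero] at hb ⊢
  refine tendsto_of_tendsto_of_tendsto_of_le_of_le tendsto_const_nhds hb
    (fun m => norm_nonneg _) (fun m => ?_)
  rw [norm_mul]
  calc ‖b m‖ * ‖x ^ m‖ ≤ ‖b m‖ * 1 := by
        refine mul_le_mul_of_nonneg_left ?_ (norm_nonneg _)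
        rw [norm_pow]; exact pow_le_one₀ (norm_nonneg _) hx
    _ = ‖b m‖ := mul_one _

lemma str_exists_max {ι : Type*} [Nonempty ι] {f : ι → K} (hf : Tendsto f cofinite (𝓝 0)) :
    ∃ j, ∀ i, ‖f i‖ ≤ ‖f j‖ := by
  by_cases h : ∀ i, f i = 0
  · exact ⟨Classical.arbitrary ι, fun i => by simp [h i, h (Classical.arbitrary ι)]⟩
  push_neg at h
  obtain ⟨i0, hi0⟩ := h
  have hε : 0 < ‖f i0‖ := norm_pos_iff.2 hi0
  have hfin : {i | ¬ ‖f i‖ < ‖f i0‖}.Finite := by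
    have h2 : ∀ᶠ i in cofinite, ‖f i‖ < ‖f i0‖ := by
      have h0 : Tendsto (fun i => ‖f i‖) cofinite (𝓝 0) := by simpa using hf.norm
      exact h0.eventually_lt_const hε
    exact Filter.eventually_cofinite.mp h2
  have hne : hfin.toFinset.Nonempty := ⟨i0, by simp⟩
  obtain ⟨j, hj, hjmax⟩ := hfin.toFinset.exists_max_image (fun i => ‖f i‖) hne
  refine ⟨j, fun i => ?_⟩
  by_cases hi : ‖f i‖ < ‖f i0‖
  · exact hi.le.trans (hjmax i0 (by simp))
  · exact hjmax i (by simpa using hi)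

lemma str_norm_tsum_le {ι : Type*} {f : ι → K} {A : ℝ} (hA : 0 ≤ A) (h : ∀ i, ‖f i‖ ≤ A) :
    ‖∑' i, f i‖ ≤ A :=
  norm_tsum_le_of_forall_le_of_nonneg hA h

lemma str_norm_tsum_lt {ι : Type*} [Nonempty ι] {f : ι → K} (hf : Tendsto f cofinite (𝓝 0))
    {A : ℝ} (h : ∀ i, ‖f i‖ < A) : ‖∑' i, f i‖ < A := by
  obtain ⟨j, hj⟩ := str_exists_max hf
  exact lt_of_le_of_lt (norm_tsum_le_of_forall_le_of_nonneg (norm_nonneg _) hj) (h j)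

end Helpers

section Strassmann
variable {K : Type*} [NontriviallyNormedField K] [IsUltrametricDist K] [CompleteSpace K]

lemma str_term_norm_le {y x : K} (hx : ‖x‖ ≤ 1) (m : ℕ) : ‖y * x ^ m‖ ≤ ‖y‖ := by
  rw [norm_mul]
  calc ‖y‖ * ‖x ^ m‖ ≤ ‖y‖ * 1 := by
        refine mul_le_mul_of_nonneg_left ?_ (norm_nonneg _)
        rw [norm_pow]; exact pow_le_one₀ (norm_nonneg _) hx
    _ = ‖y‖ := mul_one _

lemma str_shift_tendsto {b : ℕ → K} (hb : Filter.Tendsto b cofinite (𝓝 0)) (k : ℕ) :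
    Filter.Tendsto (fun m => b (m + k)) cofinite (𝓝 0) := by
  rw [Nat.cofinite_eq_atTop] at hb ⊢
  exact hb.comp (tendsto_add_atTop_nat k)

/-- Key factorization: if the power series of `b` vanishes at `x0`, then its value at `x`
is `(x - x0)` times the series with coefficients `c n = ∑' m, b (m + n + 1) * x0 ^ m`. -/
lemma str_factor {b : ℕ → K} (hb : Filter.Tendsto b cofinite (𝓝 0)) {x0 x : K}
    (hx0 : ‖x0‖ ≤ 1) (hx : ‖x‖ ≤ 1) (h0 : HasSum (fun m => b m * x0 ^ m) 0)
    {S : K} (hS : HasSum (fun m => b m * x ^ m) S) :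
    ∃ St : K, HasSum (fun n => (∑' m, b (m + n + 1) * x0 ^ m) * x ^ n) St ∧
      St * (x - x0) = S := by
  classical
  set c : ℕ → K := fun n => ∑' m, b (m + n + 1) * x0 ^ m with hc
  set T : ℕ × ℕ → K := fun q => b (q.2 + q.1 + 1) * x0 ^ q.2 * x ^ q.1 with hTdef
  -- summability of T
  have htendT : Filter.Tendsto T cofinite (𝓝 0) := by
    have hcomp : Filter.Tendsto (fun q : ℕ × ℕ => q.2 + q.1 + 1) cofinite cofinite := by
      rw [Filter.tendsto_def]
      intro s hs
      rw [Filter.mem_cofinite] at hs ⊢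
      have hsub : ((fun q : ℕ × ℕ => q.2 + q.1 + 1) ⁻¹' s)ᶜ ⊆
          ⋃ k ∈ sᶜ, {q : ℕ × ℕ | q.2 + q.1 + 1 = k} := by
        intro q hq
        simp only [Set.mem_compl_iff, Set.mem_preimage] at hq
        exact Set.mem_biUnion hq rfl
      refine Set.Finite.subset (Set.Finite.biUnion hs (fun k _ => ?_)) hsub
      refine Set.Finite.subset ((Set.finite_Iio k).prod (Set.finite_Iio k)) ?_
      rintro ⟨n, m⟩ h
      simp only [Set.mem_setOf_eq] at h
      constructor <;> simp only [Set.mem_Iio] <;> omega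
    have hbT : Filter.Tendsto (fun q : ℕ × ℕ => b (q.2 + q.1 + 1)) cofinite (𝓝 0) :=
      hb.comp hcomp
    rw [tendsto_zero_iff_norm_tendsto_zero] at hbT ⊢
    refine tendsto_of_tendsto_of_tendsto_of_le_of_le tendsto_const_nhds hbT
      (fun q => norm_nonneg _) (fun q => ?_)
    calc ‖T q‖ ≤ ‖b (q.2 + q.1 + 1) * x0 ^ q.2‖ := str_term_norm_le hx _
      _ ≤ ‖b (q.2 + q.1 + 1)‖ := str_term_norm_le hx0 _
  have hTsummable : Summable T := str_summable htendT
  obtain ⟨St, hTS⟩ := hTsummable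
  -- fiberwise sum over the first coordinate
  have hcsum : ∀ n : ℕ, HasSum (fun m => b (m + n + 1) * x0 ^ m) (c n) := by
    intro n
    refine (str_summable ?_).hasSum
    exact str_term_tendsto hx0 (str_shift_tendsto hb (n + 1))
  have hfib : HasSum (fun n => c n * x ^ n) St := by
    refine hTS.prod_fiberwise (fun n => ?_)
    exact (hcsum n).mul_right (x ^ n)
  refine ⟨St, hfib, ?_⟩
  -- antidiagonal regrouping
  have hsigma : HasSum (fun k : ℕ => ∑ p ∈ Finset.HasAntidiagonal.antidiagonal k, T p) St := by
    have he : HasSum (T ∘ Finset.HasAntidiagonal.sigmaAntidiagonalEquivProd) St :=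
      (Equiv.hasSum_iff _).mpr hTS
    refine he.sigma (fun k => ?_)
    have h2 : HasSum (fun p : Finset.HasAntidiagonal.antidiagonal k =>
        (T ∘ Finset.HasAntidiagonal.sigmaAntidiagonalEquivProd) ⟨k, p⟩)
        (∑ p ∈ (Finset.HasAntidiagonal.antidiagonal k).attach, T p.1) :=
      hasSum_fintype _
    simpa [Finset.sum_attach] using h2
  -- identify the antidiagonal sums
  have hgk : ∀ k : ℕ, (∑ p ∈ Finset.HasAntidiagonal.antidiagonal k, T p) * (x - x0) =
      b (k + 1) * (x ^ (k + 1) - x0 ^ (k + 1)) := by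
    intro k
    have h1 : ∑ p ∈ Finset.HasAntidiagonal.antidiagonal k, T p =
        b (k + 1) * ∑ i ∈ Finset.range (k + 1), x ^ i * x0 ^ (k + 1 - 1 - i) := by
      rw [Finset.Nat.sum_antidiagonal_eq_sum_range_succ_mk, Finset.mul_sum]
      refine Finset.sum_congr rfl (fun i hi => ?_)
      simp only [hTdef]
      have : k - i + i + 1 = k + 1 := by
        rw [Finset.mem_range] at hi; omega
      rw [this]
      have : k + 1 - 1 - i = k - i := by omega
      rw [this]; ring
    rw [h1, mul_assoc, geom_sum₂_mul]
  have hleft : HasSum (fun k => b (k + 1) * (x ^ (k + 1) - x0 ^ (k + 1))) (St * (x - x0)) := by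
    have h3 := hsigma.mul_right (x - x0)
    simpa only [hgk] using h3
  -- the right hand side
  have hdiff : HasSum (fun k => b k * x ^ k - b k * x0 ^ k) (S - 0) := hS.sub h0
  have hright : HasSum (fun k => b (k + 1) * x ^ (k + 1) - b (k + 1) * x0 ^ (k + 1))
      ((S - 0) - ∑ i ∈ Finset.range 1, (b i * x ^ i - b i * x0 ^ i)) :=
    (hasSum_nat_add_iff' 1).mpr hdiff
  have hval : ((S - 0) - ∑ i ∈ Finset.range 1, (b i * x ^ i - b i * x0 ^ i)) = S := by
    simp
  rw [hval] at hright
  have heq : (fun k => b (k + 1) * (x ^ (k + 1) - x0 ^ (k + 1))) =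
      (fun k => b (k + 1) * x ^ (k + 1) - b (k + 1) * x0 ^ (k + 1)) := by
    funext k; ring
  rw [heq] at hleft
  exact hleft.unique hright

end Strassmann

section Strassmann2
variable {K : Type*} [NontriviallyNormedField K] [IsUltrametricDist K] [CompleteSpace K]

lemma str_aux : ∀ (N : ℕ) (b : ℕ → K), Filter.Tendsto b cofinite (𝓝 0) →
    (∀ m, ‖b m‖ ≤ ‖b N‖) → (∀ m, N < m → ‖b m‖ < ‖b N‖) → b N ≠ 0 →
    {x : K | ‖x‖ ≤ 1 ∧ HasSum (fun m => b m * x ^ m) 0}.Finite := by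
  intro N
  induction N using Nat.strong_induction_on with
  | _ N IH =>
    intro b hb hmax hstr hN0
    have hbNpos : 0 < ‖b N‖ := norm_pos_iff.2 hN0
    by_cases hempty : {x : K | ‖x‖ ≤ 1 ∧ HasSum (fun m => b m * x ^ m) 0} = ∅
    · rw [hempty]; exact Set.finite_empty
    obtain ⟨x0, hx0, hs0⟩ : ∃ x0 : K, ‖x0‖ ≤ 1 ∧ HasSum (fun m => b m * x0 ^ m) 0 := by
      rw [Set.eq_empty_iff_forall_notMem] at hempty
      push_neg at hempty
      obtain ⟨x0, hx0⟩ := hempty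
      exact ⟨x0, hx0.1, hx0.2⟩
    -- split off the first term of the vanishing sum
    have htail : HasSum (fun m => b (m + 1) * x0 ^ (m + 1))
        ((0 : K) - ∑ i ∈ Finset.range 1, b i * x0 ^ i) :=
      (hasSum_nat_add_iff' 1).mpr hs0
    have htail' : HasSum (fun m => b (m + 1) * x0 ^ (m + 1)) (-(b 0)) := by
      simpa using htail
    rcases Nat.eq_zero_or_pos N with rfl | hNpos
    · -- N = 0 : no zeros at all, contradiction with x0
      exfalso
      have hlt : ‖∑' m, b (m + 1) * x0 ^ (m + 1)‖ < ‖b 0‖ := by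
        refine str_norm_tsum_lt ?_ (fun m => ?_)
        · exact str_shift_tendsto (str_term_tendsto hx0 hb) 1
        · calc ‖b (m + 1) * x0 ^ (m + 1)‖ ≤ ‖b (m + 1)‖ := str_term_norm_le hx0 _
            _ < ‖b 0‖ := hstr _ (Nat.succ_pos m)
      rw [htail'.tsum_eq, norm_neg] at hlt
      exact lt_irrefl _ hlt
    -- N ≥ 1 : factor out the root x0 and use the inductive hypothesis
    obtain ⟨N', rfl⟩ : ∃ N', N = N' + 1 := ⟨N - 1, by omega⟩
    set N := N' + 1
    set c : ℕ → K := fun n => ∑' m, b (m + n + 1) * x0 ^ m with hcdef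
    have hcsum : ∀ n : ℕ, HasSum (fun m => b (m + n + 1) * x0 ^ m) (c n) := fun n =>
      (str_summable (str_term_tendsto hx0 (str_shift_tendsto hb (n + 1)))).hasSum
    have hcle : ∀ n, ‖c n‖ ≤ ‖b N‖ := by
      intro n
      refine str_norm_tsum_le hbNpos.le (fun m => ?_)
      exact (str_term_norm_le hx0 m).trans (hmax _)
    have hclt : ∀ n, N' < n → ‖c n‖ < ‖b N‖ := by
      intro n hn
      refine str_norm_tsum_lt (str_term_tendsto hx0 (str_shift_tendsto hb (n + 1)))
        (fun m => ?_)
      exact lt_of_le_of_lt (str_term_norm_le hx0 m) (hstr _ (by omega))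
    have hcN' : ‖c N'‖ = ‖b N‖ := by
      -- c N' = b N + (small tail)
      have h1 : HasSum (fun m => b (m + N) * x0 ^ m) (c N') := hcsum N'
      have h2 : HasSum (fun m => b (m + 1 + N) * x0 ^ (m + 1))
          (c N' - ∑ i ∈ Finset.range 1, b (i + N) * x0 ^ i) :=
        (hasSum_nat_add_iff' 1).mpr h1
      have h3 : HasSum (fun m => b (m + 1 + N) * x0 ^ (m + 1)) (c N' - b N) := by
        simpa using h2
      have h4 : ‖c N' - b N‖ < ‖b N‖ := by
        rw [← h3.tsum_eq]
        refine str_norm_tsum_lt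
          (str_shift_tendsto (str_term_tendsto hx0 (str_shift_tendsto hb N)) 1) (fun m => ?_)
        exact lt_of_le_of_lt (str_term_norm_le hx0 _) (hstr _ (by omega))
      have h5 : c N' = b N + (c N' - b N) := by ring
      rw [h5, norm_add_eq_max_of_norm_ne_norm h4.ne',
        max_eq_left h4.le]
    -- c tends to zero
    have hctend : Filter.Tendsto c cofinite (𝓝 0) := by
      rw [Nat.cofinite_eq_atTop, NormedAddCommGroup.tendsto_nhds_zero]
      intro ε hε
      have hbat : ∀ᶠ k in Filter.atTop, ‖b k‖ < ε := by
        have hb2 := hb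
        rw [Nat.cofinite_eq_atTop, NormedAddCommGroup.tendsto_nhds_zero] at hb2
        exact hb2 ε hε
      obtain ⟨M, hM⟩ := Filter.eventually_atTop.mp hbat
      rw [Filter.eventually_atTop]
      refine ⟨M, fun n hn => ?_⟩
      refine str_norm_tsum_lt (str_term_tendsto hx0 (str_shift_tendsto hb (n + 1)))
        (fun m => ?_)
      exact lt_of_le_of_lt (str_term_norm_le hx0 m) (hM _ (by omega))
    -- inductive hypothesis applied to c
    have hZc : {x : K | ‖x‖ ≤ 1 ∧ HasSum (fun n => c n * x ^ n) 0}.Finite := by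
      refine IH N' (by omega) c hctend (fun n => ?_) (fun n hn => ?_) ?_
      · rw [hcN']; exact hcle n
      · rw [hcN']; exact hclt n hn
      · intro h
        rw [h, norm_zero] at hcN'
        exact hbNpos.ne hcN'
    -- zeros of b are contained in {x0} ∪ zeros of c
    refine Set.Finite.subset (hZc.insert x0) ?_
    rintro x ⟨hx1, hxs⟩
    by_cases hxx0 : x = x0
    · exact Set.mem_insert_iff.mpr (Or.inl hxx0)
    refine Set.mem_insert_iff.mpr (Or.inr ⟨hx1, ?_⟩)
    obtain ⟨St, hSt, hfac⟩ := str_factor hb hx0 hx1 hs0 hxs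
    have hSt0 : St = 0 := by
      rcases mul_eq_zero.mp hfac with h | h
      · exact h
      · exact absurd (sub_eq_zero.mp h) hxx0
    rw [hSt0] at hSt
    exact hSt

end Strassmann2

section Strassmann3
variable {K : Type*} [NontriviallyNormedField K] [IsUltrametricDist K] [CompleteSpace K]

lemma strassmann {b : ℕ → K} (hb : Filter.Tendsto b cofinite (𝓝 0))
    (hz : {x : K | ‖x‖ ≤ 1 ∧ HasSum (fun m => b m * x ^ m) 0}.Infinite) : ∀ m, b m = 0 := by
  by_contra h
  push_neg at h
  obtain ⟨m0, hm0⟩ := h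
  obtain ⟨j, hj⟩ := str_exists_max hb
  have hjpos : 0 < ‖b j‖ := lt_of_lt_of_le (norm_pos_iff.2 hm0) (hj m0)
  have hfin : {i | ¬ ‖b i‖ < ‖b j‖}.Finite := by
    have h2 : ∀ᶠ i in Filter.cofinite, ‖b i‖ < ‖b j‖ := by
      have h0 : Filter.Tendsto (fun i => ‖b i‖) Filter.cofinite (𝓝 0) := by simpa using hb.norm
      exact h0.eventually_lt_const hjpos
    exact Filter.eventually_cofinite.mp h2
  have hne : hfin.toFinset.Nonempty := ⟨j, by simp⟩
  set N := hfin.toFinset.max' hne with hNdef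
  have hNmem : ¬ ‖b N‖ < ‖b j‖ := by
    have := hfin.toFinset.max'_mem hne
    rwa [Set.Finite.mem_toFinset] at this
  have hNnorm : ‖b N‖ = ‖b j‖ := le_antisymm (hj N) (not_lt.mp hNmem)
  have hfinite := str_aux N b hb
    (fun m => by rw [hNnorm]; exact hj m)
    (fun m hm => by
      rw [hNnorm]
      by_contra hcon
      have hmem : m ∈ hfin.toFinset := by rw [Set.Finite.mem_toFinset]; exact hcon
      exact absurd (hfin.toFinset.le_max' m hmem) (by omega))
    (fun hcon => by rw [hcon, norm_zero] at hNnorm; exact hjpos.ne hNnorm)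
  exact hz hfinite

end Strassmann3

/-- If `g : ℤ_p → K` is continuous, analytic on `p^l ℤ_p` (i.e. `z ↦ g(p^l z)` is given
by a power series convergent on `ℤ_p`), and takes some value `c` at infinitely many
points of `p^l ℕ`, then `g` is constant on `p^l ℤ_p`. -/
theorem analytic_constant_of_infinitely_many_nat_values (p : ℕ) [Fact p.Prime]
    (K : Type*) [NontriviallyNormedField K] [NormedAlgebra ℚ_[p] K]
    [FiniteDimensional ℚ_[p] K] (l : ℕ) (g : ℤ_[p] → K) (hcont : Continuous g)
    (a : ℕ → K)
    (han : ∀ z : ℤ_[p],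
      HasSum (fun m : ℕ => a m * (algebraMap ℚ_[p] K (z : ℚ_[p])) ^ m)
        (g ((p : ℤ_[p]) ^ l * z)))
    (c : K) (hc : {m : ℕ | g ((p : ℤ_[p]) ^ l * (m : ℤ_[p])) = c}.Infinite) :
    ∀ z w : ℤ_[p], g ((p : ℤ_[p]) ^ l * z) = g ((p : ℤ_[p]) ^ l * w) := by
  haveI : IsUltrametricDist K := IsUltrametricDist.of_normedAlgebra ℚ_[p]
  haveI : CompleteSpace K := FiniteDimensional.complete ℚ_[p] K
  haveI : CharZero K := charZero_of_injective_algebraMap (algebraMap ℚ_[p] K).injective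
  set e : ℤ_[p] → K := fun z => algebraMap ℚ_[p] K (z : ℚ_[p]) with hedef
  have he_norm : ∀ z : ℤ_[p], ‖e z‖ ≤ 1 := fun z => by
    rw [hedef, norm_algebraMap']
    exact z.norm_le_one
  set b : ℕ → K := fun m => if m = 0 then a 0 - c else a m with hbdef
  -- b tends to zero
  have hasummable : Summable a := by
    have h1 := (han 1).summable
    simpa using h1
  have hb : Filter.Tendsto b cofinite (𝓝 0) := by
    refine hasummable.tendsto_cofinite_zero.congr' ?_
    have : {(0 : ℕ)}ᶜ ∈ (Filter.cofinite : Filter ℕ) := by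
      rw [Filter.mem_cofinite]; simp
    filter_upwards [this] with m hm
    rw [hbdef]
    simp only [Set.mem_compl_iff, Set.mem_singleton_iff] at hm
    simp [hm]
  -- the b-series sums to g(p^l z) - c
  have hbsum : ∀ z : ℤ_[p], HasSum (fun m => b m * (e z) ^ m) (g ((p : ℤ_[p]) ^ l * z) - c) := by
    intro z
    have h1 : HasSum (fun m : ℕ => if m = 0 then c else 0) c := hasSum_ite_eq 0 c
    have h2 := (han z).sub h1
    have heq : (fun m => a m * (algebraMap ℚ_[p] K (z : ℚ_[p])) ^ m - if m = 0 then c else 0)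
        = fun m => b m * (e z) ^ m := by
      funext m
      rw [hbdef, hedef]
      rcases Nat.eq_zero_or_pos m with rfl | hm
      · simp
      · simp [Nat.pos_iff_ne_zero.mp hm]
    rw [heq] at h2
    exact h2
  -- infinitely many zeros of the b-series in the closed unit ball
  have hz : {x : K | ‖x‖ ≤ 1 ∧ HasSum (fun m => b m * x ^ m) 0}.Infinite := by
    have hinj : Function.Injective (fun m : ℕ => e (m : ℤ_[p])) := by
      intro m1 m2 h
      have : ((m1 : ℕ) : K) = ((m2 : ℕ) : K) := by
        simpa [hedef] using h
      exact Nat.cast_injective this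
    refine Set.Infinite.mono ?_ (Set.Infinite.image hinj.injOn hc)
    rintro x ⟨m, hm, rfl⟩
    refine ⟨he_norm _, ?_⟩
    have := hbsum (m : ℤ_[p])
    rwa [hm, sub_self] at this
  -- Strassmann: all coefficients vanish
  have hb0 := strassmann hb hz
  -- hence g is constantly c on p^l ℤ_p
  have hconst : ∀ z : ℤ_[p], g ((p : ℤ_[p]) ^ l * z) = c := by
    intro z
    have h1 := hbsum z
    have h2 : (fun m => b m * (e z) ^ m) = fun _ => (0 : K) := by
      funext m; rw [hb0 m, zero_mul]
    rw [h2] at h1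
    have h3 : g ((p : ℤ_[p]) ^ l * z) - c = 0 := h1.unique hasSum_zero
    exact sub_eq_zero.mp h3
  intro z w
  rw [hconst z, hconst w]
end
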